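/- arXiv:1008.1464 — 4 statements merged into one kernel-verified Lean document; each statement's English description precedes it below -/
import Mathlib

section
/- Let (W,S) be a finite Coxeter system and let t be a reflection of W (i.e. t = w s w⁻¹ for some w ∈ W, s ∈ S). Then t can be written in the form t = y s y⁻¹ where y ∈ W and s ∈ S are such that ℓ(t) = 2·ℓ(y) + 1. -/
open List

namespace ReflPalindrome

open scoped Classical

variable {B W : Type*} [Group W] {M : CoxeterMatrix B} (cs : CoxeterSystem M W)

/-- A generic group fact used repeatedly. -/
private lemma conj_eq_iff {G : Type*} [Group G] {a b c x : G} :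
    a * x * b = c ↔ x = a⁻¹ * c * b⁻¹ := by
  constructor
  · intro h; rw [← h]; group
  · intro h; rw [h]; group

/-- The underlying function of the sign permutation attached to the simple reflection `i`. -/
noncomputable def phi (i : B) : W × ZMod 2 → W × ZMod 2 :=
  fun q => (cs.simple i * q.1 * cs.simple i,
    q.2 + if q.1 = cs.simple i then 1 else 0)

lemma sandwich (i : B) (x : W) :
    cs.simple i * (cs.simple i * x * cs.simple i) * cs.simple i = x := by
  simp [← mul_assoc, cs.simple_mul_simple_self, cs.simple_mul_simple_cancel_right]

lemma sandwich_cond (i : B) (x : W) :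
    cs.simple i * x * cs.simple i = cs.simple i ↔ x = cs.simple i := by
  constructor
  · intro h
    calc x = cs.simple i * (cs.simple i * x * cs.simple i) * cs.simple i :=
          (sandwich cs i x).symm
    _ = cs.simple i * cs.simple i * cs.simple i := by rw [h]
    _ = cs.simple i := by rw [cs.simple_mul_simple_self, one_mul]
  · rintro rfl
    rw [cs.simple_mul_simple_self, one_mul]

lemma phi_invol (i : B) : Function.Involutive (phi cs i) := by
  rintro ⟨x, ε⟩
  simp only [phi, sandwich, sandwich_cond]
  refine Prod.ext rfl ?_
  by_cases hx : x = cs.simple i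
  · rw [if_pos hx]
    show ε + 1 + 1 = ε
    rw [add_assoc, show (1 : ZMod 2) + 1 = 0 by decide, add_zero]
  · simp [hx]

/-- The sign permutation attached to the simple reflection `i`. -/
noncomputable def sperm (i : B) : Equiv.Perm (W × ZMod 2) :=
  Function.Involutive.toPerm _ (phi_invol cs i)

lemma sperm_apply (i : B) (q : W × ZMod 2) :
    sperm cs i q = (cs.simple i * q.1 * cs.simple i,
      q.2 + if q.1 = cs.simple i then 1 else 0) := rfl

lemma simple_p_conj (i j : B) :
    cs.simple j * (cs.simple i * cs.simple j) * cs.simple j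
      = (cs.simple i * cs.simple j)⁻¹ := by
  rw [mul_inv_rev, cs.inv_simple, cs.inv_simple]
  simp [← mul_assoc, cs.simple_mul_simple_cancel_right]

lemma simple_conj_pow (i j : B) (r : ℕ) :
    cs.simple j * (cs.simple i * cs.simple j) ^ r * cs.simple j
      = ((cs.simple i * cs.simple j)⁻¹) ^ r := by
  induction r with
  | zero => simpa using cs.simple_mul_simple_self j
  | succ r ih =>
    have hins : cs.simple j * ((cs.simple i * cs.simple j) * (cs.simple i * cs.simple j) ^ r)
          * cs.simple j
        = (cs.simple j * (cs.simple i * cs.simple j) * cs.simple j)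
          * (cs.simple j * (cs.simple i * cs.simple j) ^ r * cs.simple j) := by
      rw [show (cs.simple j * (cs.simple i * cs.simple j) * cs.simple j)
          * (cs.simple j * (cs.simple i * cs.simple j) ^ r * cs.simple j)
          = cs.simple j * ((cs.simple i * cs.simple j) *
              ((cs.simple j * cs.simple j) * (cs.simple i * cs.simple j) ^ r)) * cs.simple j
        from by group]
      rw [cs.simple_mul_simple_self, one_mul]
    rw [pow_succ', hins, simple_p_conj, ih, ← pow_succ']

lemma pow_mul_simple (i j : B) (r : ℕ) :
    ((cs.simple i * cs.simple j)⁻¹) ^ r * cs.simple j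
      = cs.simple j * (cs.simple i * cs.simple j) ^ r := by
  calc ((cs.simple i * cs.simple j)⁻¹) ^ r * cs.simple j
      = cs.simple j * (cs.simple i * cs.simple j) ^ r * cs.simple j * cs.simple j := by
        rw [simple_conj_pow]
  _ = cs.simple j * (cs.simple i * cs.simple j) ^ r :=
        cs.simple_mul_simple_cancel_right j

lemma cond1_aux (i j : B) (k : ℕ) :
    ((cs.simple i * cs.simple j) ^ k)⁻¹ * cs.simple j * (((cs.simple i * cs.simple j)⁻¹) ^ k)⁻¹
      = ((cs.simple i * cs.simple j)⁻¹) ^ (2 * k) * cs.simple j := by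
  rw [show (((cs.simple i * cs.simple j) ^ k)⁻¹ : W) = ((cs.simple i * cs.simple j)⁻¹) ^ k from
    (inv_pow _ _).symm]
  rw [show ((((cs.simple i * cs.simple j)⁻¹) ^ k)⁻¹ : W) = (cs.simple i * cs.simple j) ^ k from by
    rw [← inv_pow, inv_inv]]
  rw [mul_assoc, ← pow_mul_simple, ← mul_assoc, ← pow_add, ← two_mul]

lemma cond2_aux (i j : B) (k : ℕ) :
    (cs.simple j * (cs.simple i * cs.simple j) ^ k)⁻¹ * cs.simple i
        * (((cs.simple i * cs.simple j)⁻¹) ^ k * cs.simple j)⁻¹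
      = ((cs.simple i * cs.simple j)⁻¹) ^ (2 * k + 1) * cs.simple j := by
  have h1 : (cs.simple j * (cs.simple i * cs.simple j) ^ k)⁻¹
      = ((cs.simple i * cs.simple j)⁻¹) ^ k * cs.simple j := by
    rw [mul_inv_rev, ← inv_pow, cs.inv_simple]
  have h2 : (((cs.simple i * cs.simple j)⁻¹) ^ k * cs.simple j)⁻¹
      = cs.simple j * (cs.simple i * cs.simple j) ^ k := by
    rw [mul_inv_rev, cs.inv_simple, ← inv_pow, inv_inv]
  rw [h1, h2]
  rw [mul_assoc (((cs.simple i * cs.simple j)⁻¹) ^ k) (cs.simple j) (cs.simple i)]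
  rw [show cs.simple j * cs.simple i = (cs.simple i * cs.simple j)⁻¹ from by
    rw [mul_inv_rev, cs.inv_simple, cs.inv_simple]]
  rw [← pow_succ, ← pow_mul_simple, ← mul_assoc, ← pow_add,
    show k + 1 + k = 2 * k + 1 from by ring]

/-- Key power formula for the product of two sign permutations. -/
lemma sperm_mul_pow_apply (i j : B) (k : ℕ) (x : W) (ε : ZMod 2) :
    ((sperm cs i * sperm cs j) ^ k) (x, ε)
      = ((cs.simple i * cs.simple j) ^ k * x * ((cs.simple i * cs.simple j)⁻¹) ^ k,
        ε + ∑ r ∈ Finset.range (2 * k),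
          (if x = ((cs.simple i * cs.simple j)⁻¹) ^ r * cs.simple j then (1 : ZMod 2) else 0)) := by
  induction k with
  | zero => simp
  | succ k ih =>
    rw [pow_succ', Equiv.Perm.mul_apply, ih, Equiv.Perm.mul_apply, sperm_apply, sperm_apply]
    -- first components
    have hfst : cs.simple i * (cs.simple j *
          ((cs.simple i * cs.simple j) ^ k * x * ((cs.simple i * cs.simple j)⁻¹) ^ k)
          * cs.simple j) * cs.simple i
        = (cs.simple i * cs.simple j) ^ (k + 1) * x
          * ((cs.simple i * cs.simple j)⁻¹) ^ (k + 1) := by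
      rw [pow_succ' (cs.simple i * cs.simple j), pow_succ ((cs.simple i * cs.simple j)⁻¹)]
      rw [show ((cs.simple i * cs.simple j)⁻¹ : W) = cs.simple j * cs.simple i from by
        rw [mul_inv_rev, cs.inv_simple, cs.inv_simple]]
      simp only [mul_assoc]
    -- condition 1
    have hc1 : ((cs.simple i * cs.simple j) ^ k * x * ((cs.simple i * cs.simple j)⁻¹) ^ k
          = cs.simple j)
        ↔ x = ((cs.simple i * cs.simple j)⁻¹) ^ (2 * k) * cs.simple j := by
      rw [conj_eq_iff, cond1_aux]
    -- condition 2
    have hc2 : (cs.simple j * ((cs.simple i * cs.simple j) ^ k * x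
            * ((cs.simple i * cs.simple j)⁻¹) ^ k) * cs.simple j = cs.simple i)
        ↔ x = ((cs.simple i * cs.simple j)⁻¹) ^ (2 * k + 1) * cs.simple j := by
      have hrw : cs.simple j * ((cs.simple i * cs.simple j) ^ k * x
            * ((cs.simple i * cs.simple j)⁻¹) ^ k) * cs.simple j
          = (cs.simple j * (cs.simple i * cs.simple j) ^ k) * x
            * (((cs.simple i * cs.simple j)⁻¹) ^ k * cs.simple j) := by
        simp only [mul_assoc]
      rw [hrw, conj_eq_iff, cond2_aux]
    rw [show 2 * (k + 1) = 2 * k + 1 + 1 from by ring, Finset.sum_range_succ,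
      Finset.sum_range_succ]
    refine Prod.ext hfst ?_
    simp only [hc1, hc2]
    ring

lemma sperm_liftable : CoxeterMatrix.IsLiftable M (sperm cs) := by
  intro i j
  apply Equiv.ext
  rintro ⟨x, ε⟩
  rw [sperm_mul_pow_apply]
  have hp : (cs.simple i * cs.simple j) ^ M i j = 1 := cs.simple_mul_simple_pow i j
  have hq : ((cs.simple i * cs.simple j)⁻¹) ^ M i j = 1 := by rw [inv_pow, hp, inv_one]
  have hsum : ∑ r ∈ Finset.range (2 * M i j),
      (if x = ((cs.simple i * cs.simple j)⁻¹) ^ r * cs.simple j then (1 : ZMod 2) else 0)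
      = 0 := by
    rw [two_mul, Finset.sum_range_add]
    have heq : ∀ r ∈ Finset.range (M i j),
        (if x = ((cs.simple i * cs.simple j)⁻¹) ^ (M i j + r) * cs.simple j
          then (1 : ZMod 2) else 0)
        = (if x = ((cs.simple i * cs.simple j)⁻¹) ^ r * cs.simple j
          then (1 : ZMod 2) else 0) := by
      intro r _
      rw [pow_add, hq, one_mul]
    rw [Finset.sum_congr rfl heq]
    have : ∀ a : ZMod 2, a + a = 0 := by decide
    exact this _
  rw [hp, hq, hsum, one_mul, mul_one, add_zero]
  rfl

/-- The sign representation `W → Perm (W × ZMod 2)`. -/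
noncomputable def rho : W →* Equiv.Perm (W × ZMod 2) :=
  cs.lift ⟨sperm cs, sperm_liftable cs⟩

lemma rho_simple (i : B) : rho cs (cs.simple i) = sperm cs i :=
  cs.lift_apply_simple (sperm_liftable cs) i

/-- Mod-2 count of occurrences of `x` in a list. -/
noncomputable def sgn (x : W) (l : List W) : ZMod 2 :=
  (l.map fun r => if x = r then (1 : ZMod 2) else 0).sum

lemma sgn_nil (x : W) : sgn x ([] : List W) = 0 := rfl

lemma sgn_cons (x c : W) (l : List W) :
    sgn x (c :: l) = (if x = c then (1 : ZMod 2) else 0) + sgn x l := by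
  simp [sgn]

lemma sgn_append (x : W) (l l' : List W) :
    sgn x (l ++ l') = sgn x l + sgn x l' := by
  simp [sgn]

lemma sgn_eq_zero_of_not_mem {x : W} {l : List W} (h : x ∉ l) : sgn x l = 0 := by
  apply List.sum_eq_zero
  intro y hy
  simp only [List.mem_map] at hy
  obtain ⟨r, hr, rfl⟩ := hy
  rw [if_neg]
  rintro rfl
  exact h hr

lemma mem_of_sgn_eq_one {x : W} {l : List W} (h : sgn x l = 1) : x ∈ l := by
  by_contra hx
  rw [sgn_eq_zero_of_not_mem hx] at h
  exact (by decide : (0 : ZMod 2) ≠ 1) h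

lemma rightInvSeq_cons (i : B) (ω : List B) :
    cs.rightInvSeq (i :: ω)
      = ((cs.wordProd ω)⁻¹ * cs.simple i * cs.wordProd ω) :: cs.rightInvSeq ω := rfl

/-- The main count formula: applying `rho cs (π ω)` conjugates the first coordinate and
adds the parity of the number of occurrences in the right inversion sequence. -/
lemma rho_wordProd (ω : List B) (x : W) (ε : ZMod 2) :
    rho cs (cs.wordProd ω) (x, ε)
      = (cs.wordProd ω * x * (cs.wordProd ω)⁻¹, ε + sgn x (cs.rightInvSeq ω)) := by
  induction ω with
  | nil => simp [sgn_nil]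
  | cons i ω ih =>
    rw [cs.wordProd_cons, map_mul, Equiv.Perm.mul_apply, ih, rho_simple, sperm_apply]
    refine Prod.ext ?_ ?_
    · show cs.simple i * (cs.wordProd ω * x * (cs.wordProd ω)⁻¹) * cs.simple i
        = (cs.simple i * cs.wordProd ω) * x * (cs.simple i * cs.wordProd ω)⁻¹
      rw [mul_inv_rev, cs.inv_simple]
      group
    · show ε + sgn x (cs.rightInvSeq ω)
          + (if cs.wordProd ω * x * (cs.wordProd ω)⁻¹ = cs.simple i then (1 : ZMod 2) else 0)
        = ε + sgn x (cs.rightInvSeq (i :: ω))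
      rw [rightInvSeq_cons, sgn_cons]
      have hcond : (cs.wordProd ω * x * (cs.wordProd ω)⁻¹ = cs.simple i)
          ↔ x = (cs.wordProd ω)⁻¹ * cs.simple i * cs.wordProd ω := by
        rw [conj_eq_iff, inv_inv]
      simp only [hcond]
      ring

/-- The parity of the number of occurrences in the right inversion sequence only depends on
the group element represented by the word. -/
lemma sgn_eq_of_wordProd_eq {ω σ : List B} (h : cs.wordProd ω = cs.wordProd σ) (x : W) :
    sgn x (cs.rightInvSeq ω) = sgn x (cs.rightInvSeq σ) := by
  have h1 := rho_wordProd cs ω x 0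
  have h2 := rho_wordProd cs σ x 0
  rw [h] at h1
  have h3 := h1.symm.trans h2
  have h4 := congrArg Prod.snd h3
  simpa using h4

lemma rightInvSeq_append (α β : List B) :
    cs.rightInvSeq (α ++ β)
      = (cs.rightInvSeq α).map (fun r => (cs.wordProd β)⁻¹ * r * cs.wordProd β)
        ++ cs.rightInvSeq β := by
  induction α with
  | nil => simp
  | cons i α ih =>
    rw [List.cons_append, rightInvSeq_cons, rightInvSeq_cons, ih, List.map_cons,
      List.cons_append]
    congr 1
    rw [cs.wordProd_append, mul_inv_rev]
    group

lemma wordProd_split (ω : List B) (j : ℕ) (hj : j < ω.length) :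
    cs.wordProd ω
      = cs.wordProd (ω.take j) * cs.simple ω[j] * cs.wordProd (ω.drop (j + 1)) := by
  nth_rw 1 [← List.take_append_drop (j + 1) ω]
  rw [List.take_succ, List.getElem?_eq_getElem hj]
  rw [cs.wordProd_append, cs.wordProd_append]
  simp [cs.wordProd_cons, mul_assoc]

/-- The crucial conjugation identity: conjugating an entry of the right inversion sequence by
the full word product gives a conjugate of a simple reflection by a word prefix. -/
lemma conj_rightInvSeq (ω : List B) (j : ℕ) (hj : j < ω.length) :
    cs.wordProd ω * ((cs.rightInvSeq ω).getD j 1) * (cs.wordProd ω)⁻¹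
      = cs.wordProd (ω.take j) * cs.simple ω[j] * (cs.wordProd (ω.take j))⁻¹ := by
  rw [cs.getD_rightInvSeq]
  rw [List.getElem?_eq_getElem hj]
  simp only [Option.map_some, Option.getD_some]
  nth_rw 1 [wordProd_split cs ω j hj]
  rw [show (cs.wordProd ω)⁻¹
      = (cs.wordProd (ω.take j) * cs.simple ω[j] * cs.wordProd (ω.drop (j + 1)))⁻¹ from by
    rw [← wordProd_split cs ω j hj]]
  group

lemma length_take_of_reduced {ω : List B} (hω : cs.IsReduced ω) (j : ℕ) (hj : j ≤ ω.length) :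
    cs.length (cs.wordProd (ω.take j)) = j := by
  have := CoxeterSystem.IsReduced.take hω j
  rw [CoxeterSystem.IsReduced] at this
  rw [this, List.length_take]
  omega

end ReflPalindrome

open ReflPalindrome in
/-- Let `(W, S)` be a finite Coxeter system and let `t` be a reflection of `W`
(i.e. `t = w * s * w⁻¹` for some `w ∈ W`, `s ∈ S`).  Then `t` can be written in the form
`t = y * s * y⁻¹` where `y ∈ W` and `s ∈ S` are such that `ℓ(t) = 2 * ℓ(y) + 1`. -/
theorem reflection_eq_conj_simple_with_length {B W : Type*} [Group W] [Finite W]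
    {M : CoxeterMatrix B} (cs : CoxeterSystem M W) {t : W} (ht : cs.IsReflection t) :
    ∃ (y : W) (i : B), t = y * cs.simple i * y⁻¹ ∧
      cs.length t = 2 * cs.length y + 1 := by
  classical
  -- choose a conjugating element of minimal length
  have hex : ∃ n : ℕ, ∃ w : W, ∃ i : B, t = w * cs.simple i * w⁻¹ ∧ cs.length w = n := by
    obtain ⟨w, i, h⟩ := ht
    exact ⟨cs.length w, w, i, h, rfl⟩
  obtain ⟨w, i, htw, hlw⟩ := Nat.find_spec hex
  have hmin : ∀ (y : W) (j : B), t = y * cs.simple j * y⁻¹ → cs.length w ≤ cs.length y := by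
    intro y j h
    rw [hlw]
    exact Nat.find_le ⟨y, j, h, rfl⟩
  obtain ⟨ω, hωl, hωw⟩ := cs.exists_reduced_word w
  have hωred : cs.IsReduced ω := hωl
  have hωlen : ω.length = cs.length w := by rw [hωw]; exact hωl.symm
  -- the palindromic word
  set ρ : List B := ω ++ i :: ω.reverse with hρ
  have hπρ : cs.wordProd ρ = t := by
    rw [hρ, cs.wordProd_append, cs.wordProd_cons, cs.wordProd_reverse, ← hωw, htw, mul_assoc]
  -- compute the sign of t with respect to ρ
  have hsgnρ : sgn t (cs.rightInvSeq ρ) = 1 := by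
    rw [hρ, rightInvSeq_append, sgn_append, rightInvSeq_cons, sgn_cons]
    have hβ : cs.wordProd (i :: ω.reverse) = cs.simple i * w⁻¹ := by
      rw [cs.wordProd_cons, cs.wordProd_reverse, hωw]
    -- middle term is t
    have hmid : (cs.wordProd ω.reverse)⁻¹ * cs.simple i * cs.wordProd ω.reverse = t := by
      rw [cs.wordProd_reverse, ← hωw, inv_inv, htw]
    -- part 1 vanishes
    have hpart1 : sgn t ((cs.rightInvSeq ω).map
        (fun r => (cs.wordProd (i :: ω.reverse))⁻¹ * r * cs.wordProd (i :: ω.reverse))) = 0 := by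
      apply sgn_eq_zero_of_not_mem
      intro hmem
      simp only [List.mem_map] at hmem
      obtain ⟨r, hr, hrt⟩ := hmem
      -- r must equal `simple i`
      have hrsi : r = cs.simple i := by
        have h1 : t = (cs.wordProd (i :: ω.reverse))⁻¹ * r * cs.wordProd (i :: ω.reverse) :=
          hrt.symm
        rw [hβ, mul_inv_rev, inv_inv, cs.inv_simple] at h1
        -- t = (w * s i) * r * (s i * w⁻¹)
        have h2 : r = (cs.simple i * w⁻¹) * t * (w * cs.simple i) := by
          rw [h1]
          group
          simp [← mul_assoc, cs.simple_mul_simple_self, cs.simple_mul_simple_cancel_right]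
        rw [h2, htw]
        calc (cs.simple i * w⁻¹) * (w * cs.simple i * w⁻¹) * (w * cs.simple i)
            = cs.simple i * (cs.simple i * cs.simple i) := by group
        _ = cs.simple i := by rw [cs.simple_mul_simple_self, mul_one]
      obtain ⟨j, hj, hjr⟩ := List.mem_iff_getElem.mp hr
      have hjω : j < ω.length := by
        simpa using hj
      have hgetD : (cs.rightInvSeq ω).getD j 1 = cs.simple i := by
        rw [List.getD_eq_getElem _ _ hj, hjr, hrsi]
      have hconj := conj_rightInvSeq cs ω j hjω
      rw [hgetD, ← hωw] at hconj
      -- t = (π (take j)) * s ω[j] * (π (take j))⁻¹ with ℓ(π (take j)) = j < ℓ w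
      have htconj : t = cs.wordProd (ω.take j) * cs.simple ω[j] * (cs.wordProd (ω.take j))⁻¹ := by
        rw [← hconj, htw]
      have hly : cs.length (cs.wordProd (ω.take j)) = j :=
        length_take_of_reduced cs hωred j hjω.le
      have := hmin _ _ htconj
      omega
    -- part 3 vanishes
    have hpart3 : sgn t (cs.rightInvSeq ω.reverse) = 0 := by
      apply sgn_eq_zero_of_not_mem
      intro hmem
      rw [cs.rightInvSeq_reverse, List.mem_reverse] at hmem
      obtain ⟨j, hj, hjr⟩ := List.mem_iff_getElem.mp hmem
      have hjω : j < ω.length := by simpa using hj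
      have hgetD : (cs.leftInvSeq ω).getD j 1 = t := by
        rw [List.getD_eq_getElem _ _ hj, hjr]
      have h1 := cs.getD_leftInvSeq ω j
      rw [hgetD, List.getElem?_eq_getElem hjω] at h1
      simp only [Option.map_some, Option.getD_some] at h1
      have hly : cs.length (cs.wordProd (ω.take j)) = j :=
        length_take_of_reduced cs hωred j hjω.le
      have := hmin _ _ h1
      omega
    rw [hpart1, hpart3, hmid, if_pos rfl]
    ring
  -- transfer to a reduced word for t
  obtain ⟨σ, hσl, hσt⟩ := cs.exists_reduced_word t
  have hσred : cs.IsReduced σ := hσl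
  have hππ : cs.wordProd σ = cs.wordProd ρ := by rw [← hσt, hπρ]
  have hsgnσ : sgn t (cs.rightInvSeq σ) = 1 := by
    rw [sgn_eq_of_wordProd_eq cs hππ, hsgnρ]
  have hmem : t ∈ cs.rightInvSeq σ := mem_of_sgn_eq_one hsgnσ
  obtain ⟨j, hj, hjt⟩ := List.mem_iff_getElem.mp hmem
  have hjσ : j < σ.length := by simpa using hj
  have hgetD : (cs.rightInvSeq σ).getD j 1 = t := by
    rw [List.getD_eq_getElem _ _ hj, hjt]
  have hconj := conj_rightInvSeq cs σ j hjσ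
  rw [hgetD, ← hσt] at hconj
  have ht3 : t * t * t⁻¹ = t := by group
  rw [ht3] at hconj
  -- hconj : t = y * s σ[j] * y⁻¹
  set y := cs.wordProd (σ.take j) with hy
  have hly : cs.length y = j := length_take_of_reduced cs hσred j hjσ.le
  -- the suffix is y⁻¹
  have hd : cs.wordProd (σ.drop (j + 1)) = y⁻¹ := by
    have hsplit := wordProd_split cs σ j hjσ
    rw [← hσt] at hsplit
    -- t = y * s σ[j] * π (drop (j+1)) and t = y * s σ[j] * y⁻¹
    have h1 : y * cs.simple σ[j] * cs.wordProd (σ.drop (j + 1))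
        = y * cs.simple σ[j] * y⁻¹ := by
      rw [← hsplit, hconj]
    exact mul_left_cancel h1
  have hld : cs.length (cs.wordProd (σ.drop (j + 1))) = σ.length - (j + 1) := by
    have := CoxeterSystem.IsReduced.drop hσred (j + 1)
    rw [CoxeterSystem.IsReduced] at this
    rw [this, List.length_drop]
  rw [hd, cs.length_inv, hly] at hld
  have hlt : cs.length t = σ.length := by rw [hσt]; exact hσl
  exact ⟨y, σ[j], hconj, by omega⟩
end

section
/- Let (W,S) be a finite Coxeter system. The map sending a conjugacy class C of W to the ∼-equivalence class of the pairs (J(w), conjugacy class of w in W_{J(w)}) for w ∈ C_min is a well-defined bijection from the set of conjugacy classes of W onto the set 𝓘(W,S)/∼ of equivalence classes of pairs. -/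
/-- The standard parabolic subgroup `W_I` of a Coxeter system. -/
def CoxeterSystem.parabolic {B W : Type*} [Group W] {M : CoxeterMatrix B}
    (cs : CoxeterSystem M W) (I : Set B) : Subgroup W :=
  Subgroup.closure (cs.simple '' I)

/-- `C` is a conjugacy class of `W`. -/
def IsConjClassSet {W : Type*} [Group W] (C : Set W) : Prop :=
  ∃ w : W, C = {x | IsConj w x}

/-- The set of elements of minimal length in `C`. -/
def CoxeterSystem.Cmin {B W : Type*} [Group W] {M : CoxeterMatrix B}
    (cs : CoxeterSystem M W) (C : Set W) : Set W :=
  {w ∈ C | ∀ x ∈ C, cs.length w ≤ cs.length x}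

/-- `J(w)`: the set of generators occurring in some (equivalently, any) reduced
expression of `w`. -/
def CoxeterSystem.Jset {B W : Type*} [Group W] {M : CoxeterMatrix B}
    (cs : CoxeterSystem M W) (w : W) : Set B :=
  {i | ∃ ω : List B, cs.IsReduced ω ∧ cs.wordProd ω = w ∧ i ∈ ω}

/-- The conjugacy class of `w` under conjugation by a subgroup `H` (as a subset of `W`). -/
def conjClassIn {W : Type*} [Group W] (H : Subgroup W) (w : W) : Set W :=
  {x | ∃ y ∈ H, y * w * y⁻¹ = x}

/-- `(I, C')` belongs to `𝓘(W,S)`: `C'` is a conjugacy class of `W_I` which is cuspidal in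
`W_I`. -/
def CoxeterSystem.IsCuspidalPair {B W : Type*} [Group W] {M : CoxeterMatrix B}
    (cs : CoxeterSystem M W) (I : Set B) (C' : Set W) : Prop :=
  (∃ w ∈ cs.parabolic I, C' = conjClassIn (cs.parabolic I) w) ∧
  ∀ K : Set B, K ⊂ I → ∀ x ∈ C', x ∉ cs.parabolic K

/-- The equivalence `∼` on pairs: `(I₁,C₁') ∼ (I₂,C₂')` iff there is `x ∈ W` with
`I₂ = x I₁ x⁻¹` (as sets of simple reflections) and `C₂' = x C₁' x⁻¹`. -/
def CoxeterSystem.PairEquiv {B W : Type*} [Group W] {M : CoxeterMatrix B}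
    (cs : CoxeterSystem M W) (p q : Set B × Set W) : Prop :=
  ∃ x : W, cs.simple '' q.1 = (fun g => x * g * x⁻¹) '' (cs.simple '' p.1) ∧
    q.2 = (fun g => x * g * x⁻¹) '' p.2

/-- The pair `π(w) = (J(w), conjugacy class of w in W_{J(w)})` attached to `w`. -/
def CoxeterSystem.minPair {B W : Type*} [Group W] {M : CoxeterMatrix B}
    (cs : CoxeterSystem M W) (w : W) : Set B × Set W :=
  (cs.Jset w, conjClassIn (cs.parabolic (cs.Jset w)) w)

/-- The set `𝓘(W,S)` of pairs `(I, C')` with `I ⊆ S` and `C'` a cuspidal conjugacy class of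
`W_I`. -/
def CoxeterSystem.CuspPair {B W : Type*} [Group W] {M : CoxeterMatrix B}
    (cs : CoxeterSystem M W) : Type _ :=
  {p : Set B × Set W // cs.IsCuspidalPair p.1 p.2}

open List

namespace CoxAux

variable {B W : Type*} [Group W] {M : CoxeterMatrix B} (cs : CoxeterSystem M W)

open Classical

theorem two_eq_zero : (1 + 1 : ZMod 2) = 0 := by decide

theorem simple_conj_eq_iff (i : B) (u : W) :
    cs.simple i * u * cs.simple i = cs.simple i ↔ u = cs.simple i := by
  constructor
  · intro h
    have := congrArg (fun z => cs.simple i * z * cs.simple i) h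
    calc u = (cs.simple i * cs.simple i) * u * (cs.simple i * cs.simple i) := by
              rw [cs.simple_mul_simple_self]; group
      _ = cs.simple i * (cs.simple i * u * cs.simple i) * cs.simple i := by group
      _ = cs.simple i * cs.simple i * cs.simple i := by rw [h]
      _ = cs.simple i := by rw [cs.simple_mul_simple_self, one_mul]
  · rintro rfl
    rw [cs.simple_mul_simple_self, one_mul]

noncomputable def refSignFun (i : B) : W × ZMod 2 → W × ZMod 2 :=
  fun x => (cs.simple i * x.1 * cs.simple i, x.2 + if x.1 = cs.simple i then 1 else 0)

theorem refSignFun_involutive (i : B) : Function.Involutive (refSignFun cs i) := by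
  rintro ⟨u, e⟩
  have h1 : cs.simple i * (cs.simple i * u * cs.simple i) * cs.simple i = u := by
    calc cs.simple i * (cs.simple i * u * cs.simple i) * cs.simple i
        = (cs.simple i * cs.simple i) * u * (cs.simple i * cs.simple i) := by group
      _ = u := by rw [cs.simple_mul_simple_self]; group
  simp only [refSignFun, Prod.mk.injEq, h1]
  refine ⟨trivial, ?_⟩
  by_cases hu : u = cs.simple i
  · rw [if_pos hu]; erw [if_pos ((simple_conj_eq_iff cs i u).mpr hu)]
    rw [add_assoc, two_eq_zero, add_zero]
  · rw [if_neg hu]; erw [if_neg (fun hh => hu ((simple_conj_eq_iff cs i u).mp hh))]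
    rw [add_zero, add_zero]

/-- The permutation of `W × ZMod 2` attached to the simple reflection `i`. -/
noncomputable def refSign (i : B) : Equiv.Perm (W × ZMod 2) :=
  (refSignFun_involutive cs i).toPerm

theorem refSign_apply (i : B) (u : W) (e : ZMod 2) :
    refSign cs i (u, e) = (cs.simple i * u * cs.simple i, e + if u = cs.simple i then 1 else 0) :=
  rfl

end CoxAux

namespace CoxAux

variable {B W : Type*} [Group W] {M : CoxeterMatrix B} (cs : CoxeterSystem M W)

open Classical

theorem conj_iff (p u z : W) : p * u * p⁻¹ = z ↔ u = p⁻¹ * z * p := by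
  constructor
  · rintro rfl; group
  · rintro rfl; group

theorem invol_conj_iff {b : W} (hb : b * b = 1) (u z : W) :
    b * u * b = z ↔ u = b * z * b := by
  have key : ∀ v : W, b * (b * v * b) * b = v := by
    intro v
    calc b * (b * v * b) * b = (b * b) * v * (b * b) := by group
      _ = v := by rw [hb]; group
  constructor
  · intro h; rw [← h, key]
  · rintro rfl; rw [key]

private theorem sum_range_split {Mo : Type*} [AddCommMonoid Mo] (f : ℕ → Mo) (a : ℕ) :
    ∀ n, ∑ r ∈ Finset.range (a + n), f r
      = (∑ r ∈ Finset.range a, f r) + ∑ r ∈ Finset.range n, f (a + r) := by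
  intro n
  induction n with
  | zero => simp
  | succ n ih =>
    rw [← Nat.add_assoc, Finset.sum_range_succ, ih, Finset.sum_range_succ, add_assoc]

section Lift

variable (i i' : B)

/-- the indicator `χ u r`, recording `u = p⁻ʳ sᵢ'` where `p = sᵢ sᵢ'`. -/
private noncomputable def chi (u : W) (r : ℕ) : ZMod 2 :=
  if u = ((cs.simple i * cs.simple i')⁻¹) ^ r * cs.simple i' then 1 else 0

private theorem bp_comm :
    cs.simple i' * (cs.simple i * cs.simple i')
      = (cs.simple i * cs.simple i')⁻¹ * cs.simple i' := by
  rw [mul_inv_rev, cs.inv_simple, cs.inv_simple]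
  group

private theorem chi_shift (u : W) (r : ℕ) :
    chi cs i i' ((cs.simple i * cs.simple i') * u * (cs.simple i * cs.simple i')⁻¹) r
      = chi cs i i' u (r + 2) := by
  unfold chi
  set p := cs.simple i * cs.simple i' with hp
  rw [if_congr (conj_iff p u (((p⁻¹) ^ r) * cs.simple i')) rfl rfl]
  have hX : p⁻¹ * (p⁻¹ ^ r * cs.simple i') * p = p⁻¹ ^ (r + 2) * cs.simple i' := by
    calc p⁻¹ * (p⁻¹ ^ r * cs.simple i') * p
        = p⁻¹ ^ (r + 1) * (cs.simple i' * p) := by rw [pow_succ']; group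
      _ = p⁻¹ ^ (r + 1) * (p⁻¹ * cs.simple i') := by rw [bp_comm]
      _ = p⁻¹ ^ (r + 2) * cs.simple i' := by rw [show r + 2 = (r + 1) + 1 from rfl, pow_succ]; group
  rw [hX]

private theorem step_apply (u : W) (e : ZMod 2) :
    (refSign cs i * refSign cs i') (u, e)
      = ((cs.simple i * cs.simple i') * u * (cs.simple i * cs.simple i')⁻¹,
          e + chi cs i i' u 0 + chi cs i i' u 1) := by
  have h0 : (refSign cs i * refSign cs i') (u, e) = refSign cs i (refSign cs i' (u, e)) := rfl
  rw [h0, refSign_apply, refSign_apply]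
  have hfst : cs.simple i * (cs.simple i' * u * cs.simple i') * cs.simple i
      = (cs.simple i * cs.simple i') * u * (cs.simple i * cs.simple i')⁻¹ := by
    rw [mul_inv_rev, cs.inv_simple, cs.inv_simple]
    group
  have hc0 : (if u = cs.simple i' then (1 : ZMod 2) else 0) = chi cs i i' u 0 := by
    unfold chi
    rw [pow_zero, one_mul]
  have hc1 : (if cs.simple i' * u * cs.simple i' = cs.simple i then (1 : ZMod 2) else 0)
      = chi cs i i' u 1 := by
    unfold chi
    rw [if_congr (invol_conj_iff (cs.simple_mul_simple_self i') u (cs.simple i)) rfl rfl]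
    congr 2
    rw [pow_one, mul_inv_rev, cs.inv_simple, cs.inv_simple]
  rw [hfst, hc0, hc1, Prod.mk.injEq]
  exact ⟨rfl, by ring⟩

private theorem pow_step_apply (u : W) (e : ZMod 2) (k : ℕ) :
    ((refSign cs i * refSign cs i') ^ k) (u, e)
      = ((cs.simple i * cs.simple i') ^ k * u * ((cs.simple i * cs.simple i') ^ k)⁻¹,
          e + ∑ r ∈ Finset.range (2 * k), chi cs i i' u r) := by
  induction k generalizing u e with
  | zero => simp
  | succ k ih =>
    rw [pow_succ]
    have : ((refSign cs i * refSign cs i') ^ k * (refSign cs i * refSign cs i')) (u, e)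
        = ((refSign cs i * refSign cs i') ^ k) ((refSign cs i * refSign cs i') (u, e)) := by
      rw [Equiv.Perm.mul_apply]
    rw [this, step_apply, ih]
    set p := cs.simple i * cs.simple i' with hp
    have hfst : p ^ k * (p * u * p⁻¹) * (p ^ k)⁻¹ = p ^ (k + 1) * u * (p ^ (k + 1))⁻¹ := by
      rw [pow_succ]
      group
    have hsnd : e + chi cs i i' u 0 + chi cs i i' u 1
          + ∑ r ∈ Finset.range (2 * k), chi cs i i' (p * u * p⁻¹) r
        = e + ∑ r ∈ Finset.range (2 * (k + 1)), chi cs i i' u r := by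
      have h2 : ∀ r, chi cs i i' (p * u * p⁻¹) r = chi cs i i' u (r + 2) := chi_shift cs i i' u
      rw [Finset.sum_congr rfl (fun r _ => h2 r)]
      have : ∑ r ∈ Finset.range (2 * (k + 1)), chi cs i i' u r
          = chi cs i i' u 0 + chi cs i i' u 1 + ∑ r ∈ Finset.range (2 * k), chi cs i i' u (r + 2) := by
        have e1 : 2 * (k + 1) = 2 + 2 * k := by ring
        rw [e1, sum_range_split]
        have e2 : ∑ r ∈ Finset.range 2, chi cs i i' u r = chi cs i i' u 0 + chi cs i i' u 1 := by
          rw [Finset.sum_range_succ, Finset.sum_range_one]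
        rw [e2]
        congr 1
        exact Finset.sum_congr rfl (fun r _ => by rw [Nat.add_comm 2 r])
      rw [this]
      ring
    rw [hfst, hsnd]

private theorem chi_periodic (u : W) (r : ℕ) :
    chi cs i i' u (M i i' + r) = chi cs i i' u r := by
  unfold chi
  congr 2
  rw [pow_add, show ((cs.simple i * cs.simple i')⁻¹) ^ (M i i') = 1 by
    rw [inv_pow, cs.simple_mul_simple_pow, inv_one], one_mul]

theorem refSign_liftable : M.IsLiftable (fun i => refSign cs i : B → Equiv.Perm (W × ZMod 2)) := by
  intro i i'
  apply Equiv.ext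
  rintro ⟨u, e⟩
  rw [pow_step_apply, cs.simple_mul_simple_pow]
  have hsum : ∑ r ∈ Finset.range (2 * M i i'), chi cs i i' u r = 0 := by
    rw [two_mul, sum_range_split]
    rw [Finset.sum_congr rfl (fun r _ => chi_periodic cs i i' u r)]
    rw [← two_mul]
    have : ∀ x : ZMod 2, x + x = 0 := by decide
    rw [two_mul]
    exact (by rw [this]) 
  rw [hsum, add_zero]
  simp

end Lift

/-- The sign representation `ρ : W →* Perm (W × ZMod 2)`. -/
noncomputable def rho : W →* Equiv.Perm (W × ZMod 2) :=
  cs.lift ⟨fun i => refSign cs i, refSign_liftable cs⟩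

theorem rho_simple (i : B) : rho cs (cs.simple i) = refSign cs i :=
  cs.lift_apply_simple (refSign_liftable cs) i

end CoxAux

namespace CoxAux

variable {B W : Type*} [Group W] {M : CoxeterMatrix B} (cs : CoxeterSystem M W)

open Classical

/-- The mod-2 count of `u` in the right inversion sequence of `ω`. -/
noncomputable def cnt (ω : List B) (u : W) : ZMod 2 :=
  ((cs.rightInvSeq ω).map (fun x => if x = u then (1 : ZMod 2) else 0)).sum

theorem rightInvSeq_cons (i : B) (ω : List B) :
    cs.rightInvSeq (i :: ω) = ((cs.wordProd ω)⁻¹ * cs.simple i * cs.wordProd ω)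
      :: cs.rightInvSeq ω := rfl

theorem cnt_cons (i : B) (ω : List B) (u : W) :
    cnt cs (i :: ω) u
      = (if (cs.wordProd ω)⁻¹ * cs.simple i * cs.wordProd ω = u then 1 else 0) + cnt cs ω u := by
  unfold cnt
  rw [rightInvSeq_cons, List.map_cons, List.sum_cons]

theorem rho_wordProd (ω : List B) (u : W) (e : ZMod 2) :
    rho cs (cs.wordProd ω) (u, e)
      = (cs.wordProd ω * u * (cs.wordProd ω)⁻¹, e + cnt cs ω u) := by
  induction ω generalizing u e with
  | nil =>
    simp [cnt, cs.wordProd_nil]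
  | cons i ω ih =>
    rw [cs.wordProd_cons, map_mul, Equiv.Perm.mul_apply, ih, rho_simple, refSign_apply]
    set w' := cs.wordProd ω with hw'
    rw [cnt_cons, Prod.mk.injEq]
    constructor
    · rw [mul_inv_rev, cs.inv_simple]
      group
    · have hiff : (w' * u * w'⁻¹ = cs.simple i) ↔ (w'⁻¹ * cs.simple i * w' = u) := by
        constructor
        · intro h; rw [← h]; group
        · intro h; rw [← h]; group
      rw [if_congr hiff rfl rfl]
      ring

/-- The sign `η(w, u)`. -/
noncomputable def eta (w u : W) : ZMod 2 := (rho cs w (u, 0)).2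

theorem eta_eq_cnt {ω : List B} {w : W} (h : cs.wordProd ω = w) (u : W) :
    eta cs w u = cnt cs ω u := by
  unfold eta
  rw [← h, rho_wordProd, zero_add]

theorem rho_apply (w u : W) (e : ZMod 2) :
    rho cs w (u, e) = (w * u * w⁻¹, e + eta cs w u) := by
  obtain ⟨ω, hω⟩ := cs.wordProd_surjective w
  rw [← hω, rho_wordProd, eta_eq_cnt cs rfl]

theorem ris_append (α β : List B) :
    cs.rightInvSeq (α ++ β)
      = ((cs.rightInvSeq α).map fun x => (cs.wordProd β)⁻¹ * x * cs.wordProd β)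
          ++ cs.rightInvSeq β := by
  induction α with
  | nil => simp
  | cons a α ih =>
    rw [List.cons_append, rightInvSeq_cons, rightInvSeq_cons, ih, List.map_cons,
      List.cons_append]
    congr 1
    rw [cs.wordProd_append, mul_inv_rev]
    group

theorem sum_map_getD {α : Type*} {Mo : Type*} [AddCommMonoid Mo] (L : List α) (g : α → Mo)
    (d : α) : (L.map g).sum = ∑ j ∈ Finset.range L.length, g (L.getD j d) := by
  induction L with
  | nil => simp
  | cons a L ih =>
    rw [List.map_cons, List.sum_cons, List.length_cons, Finset.sum_range_succ', ih]
    simp only [List.getD_cons_succ, List.getD_cons_zero]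
    rw [add_comm]

theorem cnt_reverse (ν : List B) (b : B) :
    cnt cs ν.reverse (cs.wordProd ν * cs.simple b * (cs.wordProd ν)⁻¹)
      = cnt cs ν (cs.simple b) := by
  unfold cnt
  rw [cs.rightInvSeq_reverse, List.map_reverse, List.sum_reverse]
  rw [sum_map_getD _ _ 1, sum_map_getD _ _ 1, cs.length_leftInvSeq, cs.length_rightInvSeq]
  apply Finset.sum_congr rfl
  intro j hj
  rw [Finset.mem_range] at hj
  rw [cs.getD_leftInvSeq, cs.getD_rightInvSeq]
  rw [List.getElem?_eq_getElem hj]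
  simp only [Option.map_some, Option.getD_some]
  set aT := cs.wordProd (ν.take j) with haT
  set e := cs.simple (ν[j]) with he
  set fD := cs.wordProd (ν.drop (j + 1)) with hfD
  have hz : cs.wordProd ν = aT * e * fD := by
    rw [haT, he, hfD]
    nth_rw 1 [← List.take_append_drop j ν]
    rw [cs.wordProd_append, List.drop_eq_getElem_cons hj, cs.wordProd_cons]
    group
  have hiff : (aT * e * aT⁻¹ = cs.wordProd ν * cs.simple b * (cs.wordProd ν)⁻¹)
      ↔ (fD⁻¹ * e * fD = cs.simple b) := by
    rw [hz]
    constructor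
    · intro h
      have : cs.simple b = (aT * e * fD)⁻¹ * (aT * e * aT⁻¹) * (aT * e * fD) := by
        rw [h]; group
      rw [this]; group
    · intro h
      rw [← h]; group
  rw [if_congr hiff rfl rfl]

theorem eta_reflection_self {t : W} (ht : cs.IsReflection t) : eta cs t t = 1 := by
  obtain ⟨z, b, rfl⟩ := ht
  obtain ⟨ν, hν⟩ := cs.wordProd_surjective z
  subst hν
  have hword : cs.wordProd (ν ++ ([b] ++ ν.reverse))
      = cs.wordProd ν * cs.simple b * (cs.wordProd ν)⁻¹ := by
    rw [cs.wordProd_append, cs.wordProd_append, cs.wordProd_singleton, cs.wordProd_reverse]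
    group
  rw [eta_eq_cnt cs hword]
  unfold cnt
  rw [ris_append, List.map_append, List.sum_append, List.map_map]
  have hβ : cs.wordProd ([b] ++ ν.reverse) = cs.simple b * (cs.wordProd ν)⁻¹ := by
    rw [cs.wordProd_append, cs.wordProd_singleton, cs.wordProd_reverse]
  have hS1 : ((cs.rightInvSeq ν).map
      ((fun x => if x = cs.wordProd ν * cs.simple b * (cs.wordProd ν)⁻¹ then (1 : ZMod 2) else 0) ∘
        fun x => (cs.wordProd ([b] ++ ν.reverse))⁻¹ * x * cs.wordProd ([b] ++ ν.reverse))).sum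
      = cnt cs ν (cs.simple b) := by
    unfold cnt
    congr 1
    apply List.map_congr_left
    intro x _
    simp only [Function.comp_apply]
    have hiff : ((cs.wordProd ([b] ++ ν.reverse))⁻¹ * x * cs.wordProd ([b] ++ ν.reverse)
          = cs.wordProd ν * cs.simple b * (cs.wordProd ν)⁻¹)
        ↔ (x = cs.simple b) := by
      rw [hβ]
      constructor
      · intro h
        have h2 : x = (cs.simple b * (cs.wordProd ν)⁻¹)
            * (cs.wordProd ν * cs.simple b * (cs.wordProd ν)⁻¹)
            * (cs.simple b * (cs.wordProd ν)⁻¹)⁻¹ := by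
          rw [← h]; group
        rw [h2]; group
      · rintro rfl
        group
    rw [if_congr hiff rfl rfl]
  rw [hS1]
  have hS2 : ((cs.rightInvSeq ([b] ++ ν.reverse)).map
      (fun x => if x = cs.wordProd ν * cs.simple b * (cs.wordProd ν)⁻¹ then (1 : ZMod 2) else 0)).sum
      = 1 + cnt cs ν (cs.simple b) := by
    have hcons : ([b] ++ ν.reverse) = b :: ν.reverse := rfl
    rw [hcons]
    have h2 := cnt_cons cs b ν.reverse (cs.wordProd ν * cs.simple b * (cs.wordProd ν)⁻¹)
    unfold cnt at h2
    rw [h2]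
    have h3 : (cs.wordProd ν.reverse)⁻¹ * cs.simple b * cs.wordProd ν.reverse
        = cs.wordProd ν * cs.simple b * (cs.wordProd ν)⁻¹ := by
      rw [cs.wordProd_reverse]
      group
    rw [if_pos h3]
    congr 1
    exact cnt_reverse cs ν b
  rw [hS2]
  have : ∀ x : ZMod 2, x + (1 + x) = 1 := by decide
  exact this _

theorem eta_mul_reflection (w t : W) (ht : cs.IsReflection t) :
    eta cs (w * t) t = eta cs w t + 1 := by
  have h1 : rho cs (w * t) (t, 0) = rho cs w (rho cs t (t, 0)) := by
    rw [map_mul, Equiv.Perm.mul_apply]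
  have h2 : rho cs t (t, 0) = (t, 1) := by
    rw [rho_apply]
    have : t * t * t⁻¹ = t := by group
    rw [this, zero_add, eta_reflection_self cs ht]
  unfold eta
  rw [h1, h2, rho_apply cs w t 1, rho_apply cs w t 0]
  show 1 + eta cs w t = 0 + eta cs w t + 1
  ring

theorem length_mul_lt_of_eta_eq_one {w t : W} (ht : cs.IsReflection t)
    (h : eta cs w t = 1) : cs.length (w * t) < cs.length w := by
  obtain ⟨ω, hred, hω⟩ := cs.exists_reduced_word' w
  have hc : cnt cs ω t = 1 := by rw [← eta_eq_cnt cs hω.symm]; exact h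
  have hmem : t ∈ cs.rightInvSeq ω := by
    by_contra hmem
    have : cnt cs ω t = 0 := by
      unfold cnt
      apply List.sum_eq_zero
      intro x hx
      rw [List.mem_map] at hx
      obtain ⟨y, hy, rfl⟩ := hx
      rw [if_neg]
      intro hh
      exact hmem (hh ▸ hy)
    rw [this] at hc
    exact absurd hc (by decide)
  have := cs.isRightInversion_of_mem_rightInvSeq hred hmem
  rw [hω]
  exact this.2

theorem eta_of_rightInversion {w t : W} (ht : cs.IsReflection t)
    (hlt : cs.length (w * t) < cs.length w) : eta cs w t = 1 := by
  rcases (by decide : ∀ x : ZMod 2, x = 0 ∨ x = 1) (eta cs w t) with h | h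
  · exfalso
    have h2 : eta cs (w * t) t = 1 := by rw [eta_mul_reflection cs w t ht, h, zero_add]
    have h3 := length_mul_lt_of_eta_eq_one cs ht h2
    rw [mul_assoc, ht.mul_self, mul_one] at h3
    exact absurd h3 (Nat.lt_asymm hlt)
  · exact h

/-- **Strong exchange property**, for arbitrary (not necessarily reduced) words. -/
theorem strong_exchange (ω : List B) (t : W) (ht : cs.IsReflection t)
    (hlt : cs.length (cs.wordProd ω * t) < cs.length (cs.wordProd ω)) :
    ∃ j < ω.length, cs.wordProd ω * t = cs.wordProd (ω.eraseIdx j) := by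
  have h1 : eta cs (cs.wordProd ω) t = 1 := eta_of_rightInversion cs ht hlt
  have hc : cnt cs ω t = 1 := by rw [← eta_eq_cnt cs rfl]; exact h1
  have hmem : t ∈ cs.rightInvSeq ω := by
    by_contra hmem
    have : cnt cs ω t = 0 := by
      unfold cnt
      apply List.sum_eq_zero
      intro x hx
      rw [List.mem_map] at hx
      obtain ⟨y, hy, rfl⟩ := hx
      rw [if_neg]
      intro hh
      exact hmem (hh ▸ hy)
    rw [this] at hc
    exact absurd hc (by decide)
  obtain ⟨j, hj, hjt⟩ := List.mem_iff_getElem.mp hmem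
  rw [cs.length_rightInvSeq] at hj
  refine ⟨j, hj, ?_⟩
  rw [← cs.wordProd_mul_getD_rightInvSeq ω j]
  congr 1
  rw [← hjt, List.getD_eq_getElem _ 1 (by rw [cs.length_rightInvSeq]; exact hj)]

end CoxAux

namespace CoxAux

variable {B W : Type*} [Group W] {M : CoxeterMatrix B} (cs : CoxeterSystem M W)

open Classical

theorem isReduced_nil : cs.IsReduced ([] : List B) := by
  simp [CoxeterSystem.IsReduced]

/-- Deletion property. -/
theorem deletion {ω : List B} (h : ¬ cs.IsReduced ω) :
    ∃ ω' : List B, cs.wordProd ω' = cs.wordProd ω ∧ ω'.length < ω.length ∧ ∀ i ∈ ω', i ∈ ω := by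
  induction ω using List.reverseRecOn with
  | nil => exact absurd (isReduced_nil cs) h
  | append_singleton ω'' i ih =>
    by_cases hred : cs.IsReduced ω''
    · have hw : cs.wordProd (ω'' ++ [i]) = cs.wordProd ω'' * cs.simple i := by
        rw [cs.wordProd_append, cs.wordProd_singleton]
      have hlt : cs.length (cs.wordProd ω'' * cs.simple i) < cs.length (cs.wordProd ω'') := by
        rcases cs.length_mul_simple (cs.wordProd ω'') i with h1 | h1
        · exfalso
          apply h
          unfold CoxeterSystem.IsReduced
          rw [hw, h1, List.length_append, List.length_singleton, hred]
        · omega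
      obtain ⟨j, hj, hπ⟩ := strong_exchange cs ω'' (cs.simple i) (cs.isReflection_simple i) hlt
      refine ⟨ω''.eraseIdx j, ?_, ?_, ?_⟩
      · rw [hw, ← hπ]
      · have := List.length_eraseIdx_add_one hj
        rw [List.length_append, List.length_singleton]
        omega
      · intro x hx
        exact List.mem_append_left _ (List.mem_of_mem_eraseIdx hx)
    · obtain ⟨ω', hπ, hlen, hsub⟩ := ih hred
      refine ⟨ω' ++ [i], ?_, ?_, ?_⟩
      · rw [cs.wordProd_append, cs.wordProd_append, hπ]
      · rw [List.length_append, List.length_append]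
        simpa using hlen
      · intro x hx
        rcases List.mem_append.mp hx with hx | hx
        · exact List.mem_append_left _ (hsub x hx)
        · exact List.mem_append_right _ hx

theorem wordProd_mem_parabolic {I : Set B} {ω : List B} (hω : ∀ i ∈ ω, i ∈ I) :
    cs.wordProd ω ∈ cs.parabolic I := by
  induction ω with
  | nil => rw [cs.wordProd_nil]; exact one_mem _
  | cons i ω ih =>
    rw [cs.wordProd_cons]
    exact mul_mem (Subgroup.subset_closure ⟨i, hω i (List.mem_cons_self), rfl⟩)
      (ih fun x hx => hω x (List.mem_cons_of_mem i hx))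

theorem exists_word_of_mem_parabolic {I : Set B} {w : W} (hw : w ∈ cs.parabolic I) :
    ∃ ω : List B, (∀ i ∈ ω, i ∈ I) ∧ cs.wordProd ω = w := by
  induction hw using Subgroup.closure_induction with
  | mem x hx =>
    obtain ⟨i, hi, rfl⟩ := hx
    exact ⟨[i], by simpa using hi, cs.wordProd_singleton i⟩
  | one => exact ⟨[], by simp, cs.wordProd_nil⟩
  | mul x y _ _ hx hy =>
    obtain ⟨α, hα, rfl⟩ := hx
    obtain ⟨β, hβ, rfl⟩ := hy
    exact ⟨α ++ β, fun i hi => (List.mem_append.mp hi).elim (hα i) (hβ i),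
      cs.wordProd_append α β⟩
  | inv x _ hx =>
    obtain ⟨α, hα, rfl⟩ := hx
    exact ⟨α.reverse, fun i hi => hα i (List.mem_reverse.mp hi), cs.wordProd_reverse α⟩

theorem reduce_word : ∀ n (ω : List B), ω.length ≤ n →
    ∃ ω' : List B, cs.IsReduced ω' ∧ (∀ i ∈ ω', i ∈ ω) ∧ cs.wordProd ω' = cs.wordProd ω := by
  intro n
  induction n with
  | zero =>
    intro ω hω
    rw [Nat.le_zero, List.length_eq_zero_iff] at hω
    subst hω
    exact ⟨[], isReduced_nil cs, by simp, rfl⟩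
  | succ n ih =>
    intro ω hω
    by_cases hred : cs.IsReduced ω
    · exact ⟨ω, hred, fun _ h => h, rfl⟩
    · obtain ⟨ω₁, hπ, hlen, hsub⟩ := deletion cs hred
      obtain ⟨ω', hred', hsub', hπ'⟩ := ih ω₁ (by omega)
      exact ⟨ω', hred', fun i hi => hsub i (hsub' i hi), by rw [hπ', hπ]⟩

theorem exists_reduced_word_of_mem_parabolic {I : Set B} {w : W} (hw : w ∈ cs.parabolic I) :
    ∃ ω : List B, cs.IsReduced ω ∧ (∀ i ∈ ω, i ∈ I) ∧ cs.wordProd ω = w := by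
  obtain ⟨ω, hsub, hπ⟩ := exists_word_of_mem_parabolic cs hw
  obtain ⟨ω', hred, hsub', hπ'⟩ := reduce_word cs ω.length ω le_rfl
  exact ⟨ω', hred, fun i hi => hsub i (hsub' i hi), by rw [hπ', hπ]⟩

theorem exists_simple_of_mem_parabolic {I : Set B} {w : W} (hw : w ∈ cs.parabolic I)
    (hl : cs.length w = 1) : ∃ i ∈ I, w = cs.simple i := by
  obtain ⟨ω, hred, hsub, hπ⟩ := exists_reduced_word_of_mem_parabolic cs hw
  have hlen : ω.length = 1 := by
    unfold CoxeterSystem.IsReduced at hred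
    rw [hπ, hl] at hred
    omega
  obtain ⟨i, rfl⟩ := List.length_eq_one_iff.mp hlen
  exact ⟨i, hsub i (List.mem_singleton_self i), by rw [← hπ, cs.wordProd_singleton]⟩

theorem exists_right_descent_in_parabolic {I : Set B} {w : W} (hw : w ∈ cs.parabolic I)
    (hne : w ≠ 1) :
    ∃ i ∈ I, cs.length (w * cs.simple i) + 1 = cs.length w ∧ w * cs.simple i ∈ cs.parabolic I := by
  obtain ⟨ω, hred, hsub, hπ⟩ := exists_reduced_word_of_mem_parabolic cs hw
  have hωne : ω ≠ [] := by
    rintro rfl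
    rw [← hπ, cs.wordProd_nil] at hne
    exact hne rfl
  set i := ω.getLast hωne with hi
  have hsplit : ω.dropLast ++ [i] = ω := List.dropLast_append_getLast hωne
  refine ⟨i, hsub i (by rw [← hsplit]; exact List.mem_append_right _ (List.mem_singleton_self i)),
    ?_, ?_⟩
  · have hwsi : w * cs.simple i = cs.wordProd ω.dropLast := by
      rw [← hπ, ← hsplit, cs.wordProd_append, cs.wordProd_singleton]
      rw [hsplit]
      exact cs.simple_mul_simple_cancel_right i
    have hreddl : cs.IsReduced ω.dropLast := by
      rw [List.dropLast_eq_take]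
      exact hred.take _
    have h1 : cs.length (w * cs.simple i) = ω.dropLast.length := by rw [hwsi]; exact hreddl
    have h2 : cs.length w = ω.length := by rw [← hπ]; exact hred
    have h3 : ω.dropLast.length + 1 = ω.length := by
      rw [List.dropLast_eq_take, List.length_take]
      have := List.length_pos_iff.mpr hωne
      omega
    omega
  · have hwsi : w * cs.simple i = cs.wordProd ω.dropLast := by
      rw [← hπ, ← hsplit, cs.wordProd_append, cs.wordProd_singleton]
      rw [hsplit]
      exact cs.simple_mul_simple_cancel_right i
    rw [hwsi]
    exact wordProd_mem_parabolic cs fun x hx => hsub x (List.dropLast_subset ω hx)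

theorem simple_mem_parabolic {I : Set B} {i : B} (hi : i ∈ I) :
    cs.simple i ∈ cs.parabolic I :=
  Subgroup.subset_closure ⟨i, hi, rfl⟩

end CoxAux

namespace CoxAux

variable {B W : Type*} [Group W] {M : CoxeterMatrix B} (cs : CoxeterSystem M W)

open Classical

theorem min_coset_additive_right {I : Set B} {d : W}
    (hmin : ∀ b ∈ cs.parabolic I, cs.length d ≤ cs.length (d * b)) :
    ∀ b ∈ cs.parabolic I, cs.length (d * b) = cs.length d + cs.length b := by
  suffices H : ∀ n b, b ∈ cs.parabolic I → cs.length b = n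
      → cs.length (d * b) = cs.length d + cs.length b by
    exact fun b hb => H (cs.length b) b hb rfl
  intro n
  induction n using Nat.strong_induction_on with
  | _ n IH =>
    intro b hb hn
    by_cases hb1 : b = 1
    · subst hb1; simp
    · obtain ⟨i, hiI, hdes, hb'⟩ := exists_right_descent_in_parabolic cs hb hb1
      set b' := b * cs.simple i with hb'def
      have hlb' : cs.length b' < n := by omega
      have IH' : cs.length (d * b') = cs.length d + cs.length b' := IH _ hlb' b' hb' rfl
      have hdb : d * b = d * b' * cs.simple i := by
        rw [hb'def, ← mul_assoc, cs.simple_mul_simple_cancel_right]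
      rcases cs.length_mul_simple (d * b') i with hA | hB
      · rw [hdb, hA, IH']
        omega
      · exfalso
        -- exchange in the word δ ++ β'
        obtain ⟨δ, hδred, hδπ⟩ := cs.exists_reduced_word' d
        obtain ⟨β', hβred, hβsub, hβπ⟩ := exists_reduced_word_of_mem_parabolic cs hb'
        have hword : cs.wordProd (δ ++ β') = d * b' := by
          rw [cs.wordProd_append, ← hδπ, hβπ]
        have hlt : cs.length (cs.wordProd (δ ++ β') * cs.simple i)
            < cs.length (cs.wordProd (δ ++ β')) := by
          rw [hword]
          omega
        obtain ⟨j, hj, hπ⟩ := strong_exchange cs (δ ++ β') (cs.simple i)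
          (cs.isReflection_simple i) hlt
        rw [hword] at hπ
        rw [List.length_append] at hj
        rcases Nat.lt_or_ge j δ.length with hjδ | hjδ
        · rw [List.eraseIdx_append_of_lt_length hjδ] at hπ
          rw [cs.wordProd_append] at hπ
          -- d * b = X * b', X := π (δ.eraseIdx j)
          have hX : d * b = cs.wordProd (δ.eraseIdx j) * b' := by
            rw [hdb, hπ, hβπ]
          have hc : b * b'⁻¹ ∈ cs.parabolic I := mul_mem hb (inv_mem hb')
          have hd : d * (b * b'⁻¹) = cs.wordProd (δ.eraseIdx j) := by
            rw [← mul_assoc, hX]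
            group
          have h1 : cs.length d ≤ cs.length (d * (b * b'⁻¹)) := hmin _ hc
          have h2 : cs.length (cs.wordProd (δ.eraseIdx j)) ≤ (δ.eraseIdx j).length :=
            cs.length_wordProd_le _
          have h3 := List.length_eraseIdx_add_one hjδ
          have h4 : cs.length d = δ.length := by rw [hδπ]; exact hδred
          rw [hd] at h1
          omega
        · rw [List.eraseIdx_append_of_length_le hjδ] at hπ
          rw [cs.wordProd_append] at hπ
          have hcancel : b = cs.wordProd (β'.eraseIdx (j - δ.length)) := by
            have : d * b = d * cs.wordProd (β'.eraseIdx (j - δ.length)) := by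
              rw [hdb, hπ, ← hδπ]
            exact mul_left_cancel this
          have h2 : cs.length b ≤ (β'.eraseIdx (j - δ.length)).length := by
            rw [hcancel]; exact cs.length_wordProd_le _
          have h3 := List.length_eraseIdx_add_one (show j - δ.length < β'.length by omega)
          have h4 : cs.length b' = β'.length := by rw [← hβπ]; exact hβred
          omega

theorem min_coset_additive_left {I : Set B} {d : W}
    (hmin : ∀ a ∈ cs.parabolic I, cs.length d ≤ cs.length (a * d)) :
    ∀ a ∈ cs.parabolic I, cs.length (a * d) = cs.length a + cs.length d := by
  have hmin' : ∀ b ∈ cs.parabolic I, cs.length d⁻¹ ≤ cs.length (d⁻¹ * b) := by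
    intro b hb
    have h1 : cs.length (d⁻¹ * b) = cs.length (b⁻¹ * d) := by
      rw [← cs.length_inv (d⁻¹ * b)]
      congr 1
      group
    rw [cs.length_inv, h1]
    exact hmin b⁻¹ (inv_mem hb)
  intro a ha
  have := min_coset_additive_right cs hmin' a⁻¹ (inv_mem ha)
  have h1 : cs.length (d⁻¹ * a⁻¹) = cs.length (a * d) := by
    rw [← cs.length_inv (d⁻¹ * a⁻¹)]
    congr 1
    group
  rw [h1, cs.length_inv, cs.length_inv] at this
  omega

/-- Kilmoyer–Deodhar style lemma. -/
theorem kilmoyer_deodhar {I J : Set B} {d : W}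
    (hminR : ∀ b ∈ cs.parabolic I, cs.length d ≤ cs.length (d * b))
    (hminL : ∀ a ∈ cs.parabolic J, cs.length d ≤ cs.length (a * d)) :
    ∀ u ∈ cs.parabolic I, d * u * d⁻¹ ∈ cs.parabolic J →
      u ∈ cs.parabolic {i | i ∈ I ∧ ∃ j ∈ J, d * cs.simple i * d⁻¹ = cs.simple j} := by
  suffices H : ∀ n u, u ∈ cs.parabolic I → d * u * d⁻¹ ∈ cs.parabolic J → cs.length u = n →
      u ∈ cs.parabolic {i | i ∈ I ∧ ∃ j ∈ J, d * cs.simple i * d⁻¹ = cs.simple j} by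
    exact fun u hu hconj => H (cs.length u) u hu hconj rfl
  intro n
  induction n using Nat.strong_induction_on with
  | _ n IH =>
    intro u hu hconj hn
    by_cases hu1 : u = 1
    · subst hu1; exact one_mem _
    · obtain ⟨i, hiI, hdes, hu'⟩ := exists_right_descent_in_parabolic cs hu hu1
      set u' := u * cs.simple i with hu'def
      set a := d * u * d⁻¹ with ha
      have hadu : a * d = d * u := by rw [ha]; group
      have hRadd := min_coset_additive_right cs hminR
      have hLadd := min_coset_additive_left cs hminL
      have hla : cs.length a = cs.length u := by
        have h1 : cs.length (a * d) = cs.length a + cs.length d := hLadd a hconj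
        have h2 : cs.length (d * u) = cs.length d + cs.length u := hRadd u hu
        rw [hadu, h2] at h1
        omega
      obtain ⟨α, hαred, hαsub, hαπ⟩ := exists_reduced_word_of_mem_parabolic cs hconj
      obtain ⟨δ, hδred, hδπ⟩ := cs.exists_reduced_word' d
      have hword : cs.wordProd (α ++ δ) = a * d := by
        rw [cs.wordProd_append, hαπ, ← hδπ]
      have hlt : cs.length (cs.wordProd (α ++ δ) * cs.simple i)
          < cs.length (cs.wordProd (α ++ δ)) := by
        rw [hword]
        have h1 : a * d * cs.simple i = d * u' := by rw [hadu, hu'def]; group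
        have h2 : cs.length (d * u') = cs.length d + cs.length u' := hRadd u' hu'
        have h3 : cs.length (a * d) = cs.length a + cs.length d := hLadd a hconj
        rw [h1, h2, h3]
        omega
      obtain ⟨j, hj, hπ⟩ := strong_exchange cs (α ++ δ) (cs.simple i)
        (cs.isReflection_simple i) hlt
      rw [hword] at hπ
      rw [List.length_append] at hj
      rcases Nat.lt_or_ge j α.length with hjα | hjα
      · -- the deleted letter is in α; then d s_i d⁻¹ is a simple reflection of J
        rw [List.eraseIdx_append_of_lt_length hjα, cs.wordProd_append] at hπ
        set Y := cs.wordProd (α.eraseIdx j) with hY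
        have hYJ : Y ∈ cs.parabolic J :=
          wordProd_mem_parabolic cs fun x hx => hαsub x (List.mem_of_mem_eraseIdx hx)
        set t := d * cs.simple i * d⁻¹ with ht
        rw [← hδπ] at hπ
        have htY : t = a⁻¹ * Y := by
          rw [ht]
          calc d * cs.simple i * d⁻¹ = a⁻¹ * (a * d * cs.simple i) * d⁻¹ := by group
            _ = a⁻¹ * (Y * d) * d⁻¹ := by rw [hπ]
            _ = a⁻¹ * Y := by group
        have htJ : t ∈ cs.parabolic J := by
          rw [htY]
          exact mul_mem (inv_mem hconj) hYJ
        have htd : t * d = d * cs.simple i := by rw [ht]; group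
        have hlen_dsi : cs.length (d * cs.simple i) = cs.length d + 1 := by
          have := hRadd (cs.simple i) (simple_mem_parabolic cs hiI)
          rw [cs.length_simple] at this
          exact this
        have hlt1 : cs.length t = 1 := by
          have h1 : cs.length (t * d) = cs.length t + cs.length d := hLadd t htJ
          rw [htd, hlen_dsi] at h1
          omega
        obtain ⟨j₀, hj₀J, htj₀⟩ := exists_simple_of_mem_parabolic cs htJ hlt1
        -- induction step
        have hu'conj : d * u' * d⁻¹ ∈ cs.parabolic J := by
          have : d * u' * d⁻¹ = a * t := by rw [hu'def, ha, ht]; group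
          rw [this]
          exact mul_mem hconj htJ
        have hIH : u' ∈ cs.parabolic
            {i | i ∈ I ∧ ∃ j ∈ J, d * cs.simple i * d⁻¹ = cs.simple j} := by
          refine IH (cs.length u') (by omega) u' hu' hu'conj rfl
        have hiK : i ∈ {i | i ∈ I ∧ ∃ j ∈ J, d * cs.simple i * d⁻¹ = cs.simple j} :=
          ⟨hiI, j₀, hj₀J, by rw [← ht, htj₀]⟩
        have : u = u' * cs.simple i := by rw [hu'def, cs.simple_mul_simple_cancel_right]
        rw [this]
        exact mul_mem hIH (simple_mem_parabolic cs hiK)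
      · -- the deleted letter is in δ: contradiction with minimality
        exfalso
        rw [List.eraseIdx_append_of_length_le hjα, cs.wordProd_append] at hπ
        have hdsi : d * cs.simple i = cs.wordProd (δ.eraseIdx (j - α.length)) := by
          have : a * (d * cs.simple i) = a * cs.wordProd (δ.eraseIdx (j - α.length)) := by
            rw [← mul_assoc, hπ, hαπ]
          exact mul_left_cancel this
        have h1 : cs.length d ≤ cs.length (d * cs.simple i) :=
          hminR (cs.simple i) (simple_mem_parabolic cs hiI)
        have h2 : cs.length (d * cs.simple i) ≤ (δ.eraseIdx (j - α.length)).length := by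
          rw [hdsi]; exact cs.length_wordProd_le _
        have h3 := List.length_eraseIdx_add_one (show j - α.length < δ.length by omega)
        have h4 : cs.length d = δ.length := by rw [hδπ]; exact hδred
        omega

end CoxAux

namespace CoxAux

variable {B W : Type*} [Group W] {M : CoxeterMatrix B} (cs : CoxeterSystem M W)

open Classical

/-! ### conjugacy class lemmas -/

theorem mem_conjClassIn_self (H : Subgroup W) (w : W) : w ∈ conjClassIn H w :=
  ⟨1, one_mem H, by group⟩

theorem conjClassIn_subset {H : Subgroup W} {w : W} (hw : w ∈ H) :
    conjClassIn H w ⊆ (H : Set W) := by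
  rintro x ⟨y, hy, rfl⟩
  exact mul_mem (mul_mem hy hw) (inv_mem hy)

theorem conjClassIn_eq_of_mem {H : Subgroup W} {w u : W} (hu : u ∈ conjClassIn H w) :
    conjClassIn H u = conjClassIn H w := by
  obtain ⟨z, hz, rfl⟩ := hu
  ext x
  constructor
  · rintro ⟨y, hy, rfl⟩
    exact ⟨y * z, mul_mem hy hz, by group⟩
  · rintro ⟨y, hy, rfl⟩
    refine ⟨y * z⁻¹, mul_mem hy (inv_mem hz), ?_⟩
    group

theorem conjClassIn_conj_mem {H : Subgroup W} {w x y : W} (hy : y ∈ H)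
    (hx : x ∈ conjClassIn H w) : y * x * y⁻¹ ∈ conjClassIn H w := by
  obtain ⟨z, hz, rfl⟩ := hx
  exact ⟨y * z, mul_mem hy hz, by group⟩

theorem isConj_of_mem_conjClassIn {H : Subgroup W} {w x : W} (hx : x ∈ conjClassIn H w) :
    IsConj w x := by
  obtain ⟨y, _, rfl⟩ := hx
  exact isConj_iff.mpr ⟨y, rfl⟩

theorem conjSet_eq_of_isConj {w w' : W} (h : IsConj w w') :
    {x : W | IsConj w x} = {x : W | IsConj w' x} :=
  Set.ext fun _ => ⟨fun hx => h.symm.trans hx, fun hx => h.trans hx⟩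

theorem conjClassIn_conj {H₁ H₂ : Subgroup W} {d : W}
    (h : (H₂ : Set W) = (fun g => d * g * d⁻¹) '' (H₁ : Set W)) (w : W) :
    conjClassIn H₂ (d * w * d⁻¹) = (fun g => d * g * d⁻¹) '' conjClassIn H₁ w := by
  ext x
  constructor
  · rintro ⟨y, hy, rfl⟩
    have : y ∈ (H₂ : Set W) := hy
    rw [h] at this
    obtain ⟨z, hz, rfl⟩ := this
    exact ⟨z * w * z⁻¹, ⟨z, hz, rfl⟩, by group⟩
  · rintro ⟨g, ⟨z, hz, rfl⟩, rfl⟩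
    refine ⟨d * z * d⁻¹, ?_, by group⟩
    show d * z * d⁻¹ ∈ (H₂ : Set W)
    rw [h]
    exact ⟨z, hz, rfl⟩

theorem parabolic_conj {I₁ I₂ : Set B} {d : W}
    (h : cs.simple '' I₂ = (fun g => d * g * d⁻¹) '' (cs.simple '' I₁)) :
    (cs.parabolic I₂ : Set W) = (fun g => d * g * d⁻¹) '' (cs.parabolic I₁ : Set W) := by
  have hfun : (fun g : W => d * g * d⁻¹) = ⇑((MulAut.conj d).toMonoidHom) := by
    funext g
    simp [MulAut.conj_apply]
  unfold CoxeterSystem.parabolic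
  rw [h, hfun, ← MonoidHom.map_closure, Subgroup.coe_map]

/-! ### The main comparison of cuspidal pairs -/

theorem pair_equiv_of_isConj (p q : {p : Set B × Set W // cs.IsCuspidalPair p.1 p.2})
    {wp wq : W} (hwp : wp ∈ p.1.2) (hwq : wq ∈ q.1.2) (hconj : IsConj wp wq) :
    cs.PairEquiv p.1 q.1 := by
  obtain ⟨⟨I₁, C₁⟩, hp⟩ := p
  obtain ⟨⟨I₂, C₂⟩, hq⟩ := q
  simp only at hwp hwq ⊢
  obtain ⟨w₁, hw₁P, hC₁⟩ := hp.1
  obtain ⟨w₂, hw₂P, hC₂⟩ := hq.1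
  dsimp only at hw₁P hC₁ hw₂P hC₂
  have hC₁sub : C₁ ⊆ (cs.parabolic I₁ : Set W) := by
    rw [hC₁]; exact conjClassIn_subset hw₁P
  have hC₂sub : C₂ ⊆ (cs.parabolic I₂ : Set W) := by
    rw [hC₂]; exact conjClassIn_subset hw₂P
  have hC₁conj : ∀ y ∈ cs.parabolic I₁, ∀ x ∈ C₁, y * x * y⁻¹ ∈ C₁ := by
    intro y hy x hx
    rw [hC₁] at hx ⊢
    exact conjClassIn_conj_mem hy hx
  have hC₂conj : ∀ y ∈ cs.parabolic I₂, ∀ x ∈ C₂, y * x * y⁻¹ ∈ C₂ := by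
    intro y hy x hx
    rw [hC₂] at hx ⊢
    exact conjClassIn_conj_mem hy hx
  -- the set of conjugators
  set X : Set W := {x : W | ∃ u ∈ C₁, x * u * x⁻¹ ∈ C₂} with hX
  have hXne : X.Nonempty := by
    obtain ⟨c, hc⟩ := isConj_iff.mp hconj
    exact ⟨c, wp, hwp, by rw [hc]; exact hwq⟩
  have stabR : ∀ b ∈ cs.parabolic I₁, ∀ x ∈ X, x * b ∈ X := by
    rintro b hb x ⟨u, huC, hxu⟩
    refine ⟨b⁻¹ * u * b, ?_, ?_⟩
    · have := hC₁conj b⁻¹ (inv_mem hb) u huC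
      simpa using this
    · have : (x * b) * (b⁻¹ * u * b) * (x * b)⁻¹ = x * u * x⁻¹ := by group
      rw [this]
      exact hxu
  have stabL : ∀ a ∈ cs.parabolic I₂, ∀ x ∈ X, a * x ∈ X := by
    rintro a ha x ⟨u, huC, hxu⟩
    refine ⟨u, huC, ?_⟩
    have : (a * x) * u * (a * x)⁻¹ = a * (x * u * x⁻¹) * a⁻¹ := by group
    rw [this]
    exact hC₂conj a ha _ hxu
  -- a minimal length element of X
  have hSne : (cs.length '' X).Nonempty := hXne.image _
  obtain ⟨d, hdX, hdn⟩ := Nat.sInf_mem hSne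
  have hdmin : ∀ x ∈ X, cs.length d ≤ cs.length x := by
    intro x hx
    rw [hdn]
    exact Nat.sInf_le ⟨x, hx, rfl⟩
  obtain ⟨u, huC₁, hduC₂⟩ := hdX
  have hminR : ∀ b ∈ cs.parabolic I₁, cs.length d ≤ cs.length (d * b) :=
    fun b hb => hdmin _ (stabR b hb d ⟨u, huC₁, hduC₂⟩)
  have hminL : ∀ a ∈ cs.parabolic I₂, cs.length d ≤ cs.length (a * d) :=
    fun a ha => hdmin _ (stabL a ha d ⟨u, huC₁, hduC₂⟩)
  have huP : u ∈ cs.parabolic I₁ := hC₁sub huC₁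
  have hu₂P : d * u * d⁻¹ ∈ cs.parabolic I₂ := hC₂sub hduC₂
  -- first application of Kilmoyer–Deodhar
  have KD1 := kilmoyer_deodhar cs hminR hminL u huP hu₂P
  have hK₁ : {i | i ∈ I₁ ∧ ∃ j ∈ I₂, d * cs.simple i * d⁻¹ = cs.simple j} = I₁ := by
    by_contra hne
    have hss : {i | i ∈ I₁ ∧ ∃ j ∈ I₂, d * cs.simple i * d⁻¹ = cs.simple j} ⊂ I₁ :=
      ⟨fun i hi => hi.1, fun hsup => hne (Set.Subset.antisymm (fun i hi => hi.1)
        (fun i hi => hsup hi))⟩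
    exact hp.2 _ hss u huC₁ KD1
  have hsub1 : ∀ i ∈ I₁, ∃ j ∈ I₂, d * cs.simple i * d⁻¹ = cs.simple j := by
    intro i hi
    have : i ∈ {i | i ∈ I₁ ∧ ∃ j ∈ I₂, d * cs.simple i * d⁻¹ = cs.simple j} := by
      rw [hK₁]; exact hi
    exact this.2
  -- second application, with d⁻¹
  have hminR' : ∀ b ∈ cs.parabolic I₂, cs.length d⁻¹ ≤ cs.length (d⁻¹ * b) := by
    intro b hb
    have h1 : cs.length (d⁻¹ * b) = cs.length (b⁻¹ * d) := by
      rw [← cs.length_inv (d⁻¹ * b)]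
      congr 1
      group
    rw [cs.length_inv, h1]
    exact hdmin _ (stabL b⁻¹ (inv_mem hb) d ⟨u, huC₁, hduC₂⟩)
  have hminL' : ∀ a ∈ cs.parabolic I₁, cs.length d⁻¹ ≤ cs.length (a * d⁻¹) := by
    intro a ha
    have h1 : cs.length (a * d⁻¹) = cs.length (d * a⁻¹) := by
      rw [← cs.length_inv (a * d⁻¹)]
      congr 1
      group
    rw [cs.length_inv, h1]
    exact hdmin _ (stabR a⁻¹ (inv_mem ha) d ⟨u, huC₁, hduC₂⟩)
  have hback : d⁻¹ * (d * u * d⁻¹) * d⁻¹⁻¹ ∈ cs.parabolic I₁ := by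
    have : d⁻¹ * (d * u * d⁻¹) * d⁻¹⁻¹ = u := by group
    rw [this]
    exact huP
  have KD2 := kilmoyer_deodhar cs hminR' hminL' (d * u * d⁻¹) hu₂P hback
  have hK₂ : {j | j ∈ I₂ ∧ ∃ i ∈ I₁, d⁻¹ * cs.simple j * d⁻¹⁻¹ = cs.simple i} = I₂ := by
    by_contra hne
    have hss : {j | j ∈ I₂ ∧ ∃ i ∈ I₁, d⁻¹ * cs.simple j * d⁻¹⁻¹ = cs.simple i} ⊂ I₂ :=
      ⟨fun j hj => hj.1, fun hsup => hne (Set.Subset.antisymm (fun j hj => hj.1)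
        (fun j hj => hsup hj))⟩
    exact hq.2 _ hss _ hduC₂ KD2
  have hsub2 : ∀ j ∈ I₂, ∃ i ∈ I₁, d⁻¹ * cs.simple j * d⁻¹⁻¹ = cs.simple i := by
    intro j hj
    have : j ∈ {j | j ∈ I₂ ∧ ∃ i ∈ I₁, d⁻¹ * cs.simple j * d⁻¹⁻¹ = cs.simple i} := by
      rw [hK₂]; exact hj
    exact this.2
  -- the simple sets correspond
  have hS : cs.simple '' I₂ = (fun g => d * g * d⁻¹) '' (cs.simple '' I₁) := by
    ext x
    constructor
    · rintro ⟨j, hj, rfl⟩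
      obtain ⟨i, hi, heq⟩ := hsub2 j hj
      refine ⟨cs.simple i, ⟨i, hi, rfl⟩, ?_⟩
      rw [← heq]
      group
    · rintro ⟨y, ⟨i, hi, rfl⟩, rfl⟩
      obtain ⟨j, hj, heq⟩ := hsub1 i hi
      exact ⟨j, hj, heq.symm⟩
  refine ⟨d, hS, ?_⟩
  -- the classes correspond
  have hP : (cs.parabolic I₂ : Set W) = (fun g => d * g * d⁻¹) '' (cs.parabolic I₁ : Set W) :=
    parabolic_conj cs hS
  have e₁ : C₁ = conjClassIn (cs.parabolic I₁) u := by
    rw [hC₁]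
    exact (conjClassIn_eq_of_mem (hC₁ ▸ huC₁)).symm
  have e₂ : C₂ = conjClassIn (cs.parabolic I₂) (d * u * d⁻¹) := by
    rw [hC₂]
    exact (conjClassIn_eq_of_mem (hC₂ ▸ hduC₂)).symm
  rw [e₁, e₂]
  exact conjClassIn_conj hP u

end CoxAux

namespace CoxAux

variable {B W : Type*} [Group W] {M : CoxeterMatrix B} (cs : CoxeterSystem M W)

open Classical

/-- Representative of a cuspidal pair. -/
noncomputable def pairRep (p : {p : Set B × Set W // cs.IsCuspidalPair p.1 p.2}) : W :=
  Classical.choose p.2.1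

theorem pairRep_mem (p : {p : Set B × Set W // cs.IsCuspidalPair p.1 p.2}) :
    pairRep cs p ∈ p.1.2 := by
  have hspec := Classical.choose_spec p.2.1
  rw [hspec.2]
  exact mem_conjClassIn_self _ _

theorem isConj_pairRep_of_mem {p : {p : Set B × Set W // cs.IsCuspidalPair p.1 p.2}} {x : W}
    (hx : x ∈ p.1.2) : IsConj (pairRep cs p) x := by
  have hspec := Classical.choose_spec p.2.1
  have h1 : IsConj (Classical.choose p.2.1) x := by
    rw [hspec.2] at hx
    exact isConj_of_mem_conjClassIn hx
  exact h1

/-- The map from cuspidal pairs to conjugacy classes. -/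
noncomputable def gPair (p : {p : Set B × Set W // cs.IsCuspidalPair p.1 p.2}) :
    {C : Set W // IsConjClassSet C} :=
  ⟨{x | IsConj (pairRep cs p) x}, ⟨pairRep cs p, rfl⟩⟩

theorem gPair_respects (p q : {p : Set B × Set W // cs.IsCuspidalPair p.1 p.2})
    (h : cs.PairEquiv p.1 q.1) : gPair cs p = gPair cs q := by
  obtain ⟨x, _, h2⟩ := h
  have hq : pairRep cs q ∈ q.1.2 := pairRep_mem cs q
  rw [h2] at hq
  obtain ⟨y, hy, hyq⟩ := hq
  have h3 : IsConj (pairRep cs p) y := isConj_pairRep_of_mem cs hy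
  have h4 : IsConj y (pairRep cs q) := by
    rw [← hyq]
    exact isConj_iff.mpr ⟨x, rfl⟩
  exact Subtype.ext (conjSet_eq_of_isConj (h3.trans h4))

/-- Descended map on the quotient. -/
noncomputable def gQuot :
    Quot (fun p q : cs.CuspPair => cs.PairEquiv p.1 q.1) → {C : Set W // IsConjClassSet C} :=
  Quot.lift (gPair cs) (gPair_respects cs)

theorem gQuot_injective : Function.Injective (gQuot cs) := by
  intro q₁ q₂
  induction q₁ using Quot.ind with
  | _ p₁ =>
    induction q₂ using Quot.ind with
    | _ p₂ =>
      intro h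
      have hsets : {x | IsConj (pairRep cs p₁) x} = {x | IsConj (pairRep cs p₂) x} :=
        congrArg Subtype.val h
      have hconj : IsConj (pairRep cs p₁) (pairRep cs p₂) := by
        have : pairRep cs p₂ ∈ {x | IsConj (pairRep cs p₂) x} := IsConj.refl _
        rw [← hsets] at this
        exact this
      exact Quot.sound (pair_equiv_of_isConj cs p₁ p₂ (pairRep_mem cs p₁) (pairRep_mem cs p₂)
        hconj)

theorem gQuot_surjective : Function.Surjective (gQuot cs) := by
  rintro ⟨C, hC⟩
  obtain ⟨w₀, rfl⟩ := hC
  -- a finite support set for a conjugate of w₀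
  obtain ⟨ω, hω⟩ := cs.wordProd_surjective w₀
  have hbase : (Set.ncard {i | i ∈ ω}) ∈
      {n : ℕ | ∃ K : Set B, ∃ x : W, IsConj w₀ x ∧ x ∈ cs.parabolic K ∧ K.Finite ∧
        K.ncard = n} := by
    refine ⟨{i | i ∈ ω}, w₀, IsConj.refl w₀, ?_, ω.finite_toSet, rfl⟩
    rw [← hω]
    exact wordProd_mem_parabolic cs fun i hi => hi
  obtain ⟨K₀, x₀, hconj₀, hmem₀, hfin₀, hncard₀⟩ := Nat.sInf_mem ⟨_, hbase⟩
  have hcusp : cs.IsCuspidalPair K₀ (conjClassIn (cs.parabolic K₀) x₀) := by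
    constructor
    · exact ⟨x₀, hmem₀, rfl⟩
    · intro K hK x hx hxK
      have hconjx : IsConj w₀ x := hconj₀.trans (isConj_of_mem_conjClassIn hx)
      have hKfin : K.Finite := hfin₀.subset hK.subset
      have hlt : K.ncard < K₀.ncard := Set.ncard_lt_ncard hK hfin₀
      have hle : sInf {n : ℕ | ∃ K : Set B, ∃ x : W, IsConj w₀ x ∧ x ∈ cs.parabolic K ∧
          K.Finite ∧ K.ncard = n} ≤ K.ncard :=
        Nat.sInf_le ⟨K, x, hconjx, hxK, hKfin, rfl⟩
      omega
  refine ⟨Quot.mk _ ⟨(K₀, conjClassIn (cs.parabolic K₀) x₀), hcusp⟩, ?_⟩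
  show gPair cs _ = _
  apply Subtype.ext
  show {x | IsConj (pairRep cs _) x} = {x | IsConj w₀ x}
  have h1 : IsConj x₀ (pairRep cs ⟨(K₀, conjClassIn (cs.parabolic K₀) x₀), hcusp⟩) := by
    have := pairRep_mem cs ⟨(K₀, conjClassIn (cs.parabolic K₀) x₀), hcusp⟩
    exact isConj_of_mem_conjClassIn this
  exact (conjSet_eq_of_isConj (hconj₀.trans h1)).symm

end CoxAux

/-- The map sending a conjugacy class `C` of `W` to the `∼`-equivalence class
of the pairs `(J(w), conjugacy class of w in W_{J(w)})`, `w ∈ C_min`, is a well-defined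
bijection from the set of conjugacy classes of `W` onto `𝓘(W,S)/∼`. -/
theorem conjClasses_biject_with_cuspidal_pairs {B W : Type*} [Group W] [Finite W]
    {M : CoxeterMatrix B} (cs : CoxeterSystem M W) :
    ∃ f : {C : Set W // IsConjClassSet C} →
        Quot (fun p q : cs.CuspPair => cs.PairEquiv p.1 q.1),
      Function.Bijective f ∧
      ∀ (C : {C : Set W // IsConjClassSet C}) (w : W), w ∈ cs.Cmin C.1 →
        ∀ h : cs.IsCuspidalPair (cs.minPair w).1 (cs.minPair w).2,
          f C = Quot.mk _ ⟨cs.minPair w, h⟩ := by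
  classical
  have hbij : Function.Bijective (CoxAux.gQuot cs) :=
    ⟨CoxAux.gQuot_injective cs, CoxAux.gQuot_surjective cs⟩
  let e := Equiv.ofBijective _ hbij
  refine ⟨e.symm, e.symm.bijective, ?_⟩
  intro C w hw h
  rw [Equiv.symm_apply_eq]
  apply Subtype.ext
  have he : (e (Quot.mk _ ⟨cs.minPair w, h⟩) : Set W)
      = {x | IsConj (CoxAux.pairRep cs ⟨cs.minPair w, h⟩) x} := rfl
  rw [he]
  obtain ⟨Cset, hCset⟩ := C
  obtain ⟨w₀, rfl⟩ := hCset
  have hwC : IsConj w₀ w := hw.1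
  have hrep : IsConj w (CoxAux.pairRep cs ⟨cs.minPair w, h⟩) := by
    have hmem := CoxAux.pairRep_mem cs ⟨cs.minPair w, h⟩
    exact CoxAux.isConj_of_mem_conjClassIn hmem
  exact CoxAux.conjSet_eq_of_isConj (hwC.trans hrep)
end

section
/- Let (W,S) be a Coxeter system of type D_n and let α be a partition of n with an even number h of nonzero parts α₁ ≤ α₂ ≤ … ≤ α_h. Set m_i = α₁ + ⋯ + α_{i−1} (so m₁ = 0), b_i := b⁻(m_i, α_i), and w_α := b₁ b₂ ⋯ b_h. Then w_α = (b_{h−1} b_h)(b_{h−3} b_{h−2}) ⋯ (b₃ b₄)(b₁ b₂); in particular w_α⁻¹ = (b₁b₂)⁻¹ (b₃b₄)⁻¹ ⋯ (b_{h−1}b_h)⁻¹. -/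
/-- The simple reflection with natural-number index `k` (junk value `1` if `k ≥ n`).
In type `Dₙ` we label the generators so that index `0` is `u` and index `k` (`1 ≤ k ≤ n−1`)
is `s_k`. -/
def CoxeterSystem.gen {n : ℕ} {W : Type*} [Group W] {M : CoxeterMatrix (Fin n)}
    (cs : CoxeterSystem M W) (k : ℕ) : W :=
  if h : k < n then cs.simple ⟨k, h⟩ else 1

/-- The element `ŝ_i = s_i ⋯ s₂ u s₁ s₂ ⋯ s_i` of a Coxeter group of type `Dₙ`
(so `ŝ₀ = 1` and `ŝ₁ = u s₁`). -/
def CoxeterSystem.shatD {n : ℕ} {W : Type*} [Group W] {M : CoxeterMatrix (Fin n)}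
    (cs : CoxeterSystem M W) : ℕ → W
  | 0 => 1
  | 1 => cs.gen 0 * cs.gen 1
  | i + 2 => cs.gen (i + 2) * cs.shatD (i + 1) * cs.gen (i + 2)

/-- The "negative block" `b⁻(m,d) = ŝ_m s_{m+1} s_{m+2} ⋯ s_{m+d−1}` of length `d`
starting at `m`, in type `Dₙ`. -/
def CoxeterSystem.negBlockD {n : ℕ} {W : Type*} [Group W] {M : CoxeterMatrix (Fin n)}
    (cs : CoxeterSystem M W) (m d : ℕ) : W :=
  cs.shatD m * ((List.range (d - 1)).map fun k => cs.gen (m + 1 + k)).prod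

/-- `m_i = α₁ + ⋯ + α_{i−1}` (so `m₁ = 0`), for a sequence of parts `α` indexed by
`1, …, h`. -/
def partSum (α : ℕ → ℕ) (i : ℕ) : ℕ := ∑ j ∈ Finset.Ico 1 i, α j

section GroupWords
variable {G : Type*} [Group G]

private lemma inv_eq_self_of_sq {s : G} (hs : s * s = 1) : s⁻¹ = s :=
  inv_eq_of_mul_eq_one_right hs

private lemma commute_of_sq_two {s t : G} (hs : s * s = 1) (ht : t * t = 1)
    (h : (s * t) ^ 2 = 1) : Commute s t := by
  have h' : (s * t) * (s * t) = 1 := by rw [← sq]; exact h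
  have h2 : s * t = (s * t)⁻¹ := (inv_eq_of_mul_eq_one_right h').symm
  rw [mul_inv_rev, inv_eq_self_of_sq hs, inv_eq_self_of_sq ht] at h2
  exact h2

private lemma braid_of_sq_three {s t : G} (hs : s * s = 1) (ht : t * t = 1)
    (h : (s * t) ^ 3 = 1) : s * t * s = t * s * t := by
  have h' : (s * t * s) * (t⁻¹ * s⁻¹ * t⁻¹)⁻¹ = 1 := by
    rw [show (s*t*s) * (t⁻¹*s⁻¹*t⁻¹)⁻¹ = (s*t)^3 by rw [pow_succ, pow_succ, pow_one]; group]
    exact h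
  have h2 : s * t * s = t⁻¹ * s⁻¹ * t⁻¹ := by
    have := mul_eq_one_iff_eq_inv.mp h'
    rwa [inv_inv] at this
  rwa [inv_eq_self_of_sq hs, inv_eq_self_of_sq ht] at h2

private lemma commute_of_conj_fixed {g x : G} (hg : g * g = 1) (h : g * x * g = x) :
    Commute g x := by
  have h2 : x * g = g * x := by
    conv_lhs => rw [← h]
    rw [mul_assoc (g*x) g g, hg, mul_one]
  exact h2.symm

private lemma commute_conj {p a b : G} (hp : p * p = 1) (h : Commute a b) :
    Commute (p * a * p) (p * b * p) := by
  have h1 : (p*a*p) * (p*b*p) = p * (a * (p*p) * b) * p := by group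
  rw [hp] at h1
  have h2 : (p*b*p) * (p*a*p) = p * (b * (p*p) * a) * p := by group
  rw [hp] at h2
  show (p*a*p) * (p*b*p) = (p*b*p) * (p*a*p)
  rw [h1, h2]
  simp only [mul_one]
  rw [h.eq]

private lemma word_conj_braid {p q x : G} (hqq : q*q = 1) (hpq : p*q*p = q*p*q)
    (hqx : q*x = x*q) : p*(q*(p*x*p)*q)*p = q*(p*x*p)*q := by
  have e1 : p*(q*(p*x*p)*q)*p = (p*q*p)*x*(p*q*p) := by group
  rw [e1, hpq]
  have e2 : (q*p*q)*x*(q*p*q) = q*p*(q*x*q)*p*q := by group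
  rw [e2, show q*x*q = x by rw [hqx, mul_assoc, hqq, mul_one]]
  group

private lemma conj_swap {g q X : G} (h : g*q = q*g) : g*(q*X*q)*g = q*(g*X*g)*q := by
  rw [show g*(q*X*q)*g = (g*q)*X*(q*g) by group,
      show q*(g*X*g)*q = (q*g)*X*(g*q) by group, h]

private lemma trailing {a b c a' b' c' : G} (h : a*b*c = a'*b'*c') :
    ∀ w : G, a*(b*(c*w)) = a'*(b'*(c'*w)) := by
  intro w
  rw [← mul_assoc, ← mul_assoc, h, mul_assoc, mul_assoc]

private lemma trailing2 {a b a' b' : G} (h : a*b = a'*b') :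
    ∀ w : G, a*(b*w) = a'*(b'*w) := by
  intro w
  rw [← mul_assoc, h, mul_assoc]

/-- The key word computation in the subgroup generated by `u, s₁, s₂`. -/
private lemma wordD1 {u s t : G}
    (hu1 : ∀ w, u*(s*w) = s*(u*w))
    (hbu : ∀ w, u*(t*(u*w)) = t*(u*(t*w)))
    (hb : ∀ w, s*(t*(s*w)) = t*(s*(t*w))) :
    (∀ w, u*(s*(t*(u*(s*(t*w))))) = s*(t*(u*(s*(t*(s*w)))))) ∧
    (∀ w, t*(u*(s*(t*(u*(s*w))))) = s*(t*(u*(s*(t*(s*w)))))) := by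
  constructor
  · intro w
    conv_lhs => rw [hu1, hbu, ← hb]
  · intro w
    conv_lhs => rw [hu1, hbu, ← hb, ← hu1]

end GroupWords

namespace DAux
open CoxeterSystem

variable {n : ℕ} {W : Type*} [Group W] {M : CoxeterMatrix (Fin n)}

/-- Basic consequences of the type `Dₙ` Coxeter relations, phrased for `cs.gen`. -/
structure DFacts (cs : CoxeterSystem M W) : Prop where
  sq : ∀ i : ℕ, cs.gen i * cs.gen i = 1
  far : ∀ i j : ℕ, 1 ≤ i → i + 2 ≤ j → Commute (cs.gen i) (cs.gen j)
  cu : ∀ j : ℕ, 3 ≤ j → Commute (cs.gen 0) (cs.gen j)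
  cu1 : Commute (cs.gen 0) (cs.gen 1)
  br : ∀ i : ℕ, 1 ≤ i → i + 2 ≤ n →
    cs.gen i * cs.gen (i+1) * cs.gen i = cs.gen (i+1) * cs.gen i * cs.gen (i+1)
  bru : cs.gen 0 * cs.gen 2 * cs.gen 0 = cs.gen 2 * cs.gen 0 * cs.gen 2

variable {cs : CoxeterSystem M W}

lemma shatD_zero : cs.shatD 0 = 1 := rfl
lemma shatD_one : cs.shatD 1 = cs.gen 0 * cs.gen 1 := rfl
lemma shatD_succ (i : ℕ) :
    cs.shatD (i+2) = cs.gen (i+2) * cs.shatD (i+1) * cs.gen (i+2) := rfl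

/-- `s_j` commutes with `ŝ_a` when `2 ≤ j ≤ a−1` or `j ≥ a+2`. -/
lemma comm_gen_shat (F : DFacts cs) :
    ∀ a, a + 1 ≤ n → ∀ j, ((2 ≤ j ∧ j + 1 ≤ a) ∨ a + 2 ≤ j) →
      Commute (cs.gen j) (cs.shatD a) := by
  intro a
  induction a using Nat.strong_induction_on with
  | _ a ih =>
    rcases a with _ | _ | a
    · intro _ j _
      rw [shatD_zero]
      exact Commute.one_right _
    · intro _ j hj
      have hj3 : 3 ≤ j := by omega
      rw [shatD_one]
      exact (F.cu j hj3).symm.mul_right (F.far 1 j le_rfl (by omega)).symm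
    · intro hle j hj
      rw [shatD_succ]
      rcases hj with ⟨hj2, hja⟩ | hja
      · rcases Nat.lt_or_ge j (a+1) with hlt | hge
        · have c1 : Commute (cs.gen j) (cs.gen (a+2)) := F.far j (a+2) (by omega) (by omega)
          have c2 : Commute (cs.gen j) (cs.shatD (a+1)) :=
            ih (a+1) (by omega) (by omega) j (Or.inl ⟨hj2, by omega⟩)
          exact (c1.mul_right c2).mul_right c1
        · have hj' : j = a + 1 := by omega
          subst hj'
          obtain ⟨a', rfl⟩ : ∃ a', a = a' + 1 := ⟨a - 1, by omega⟩
          rw [shatD_succ]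
          have hqx : Commute (cs.gen (a'+3)) (cs.shatD (a'+1)) :=
            ih (a'+1) (by omega) (by omega) (a'+3) (Or.inr (by omega))
          have hpq : cs.gen (a'+2) * cs.gen (a'+3) * cs.gen (a'+2)
              = cs.gen (a'+3) * cs.gen (a'+2) * cs.gen (a'+3) := F.br (a'+2) (by omega) (by omega)
          have h1 := commute_conj (F.sq (a'+2)) hqx
          rw [hpq] at h1
          have h2 := commute_conj (F.sq (a'+3)) h1
          have e : cs.gen (a'+3) * (cs.gen (a'+3) * cs.gen (a'+2) * cs.gen (a'+3)) * cs.gen (a'+3)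
              = cs.gen (a'+2) := by
            rw [show cs.gen (a'+3) * (cs.gen (a'+3) * cs.gen (a'+2) * cs.gen (a'+3)) * cs.gen (a'+3)
                = (cs.gen (a'+3) * cs.gen (a'+3)) * cs.gen (a'+2) *
                  (cs.gen (a'+3) * cs.gen (a'+3)) by group, F.sq (a'+3)]
            group
          rw [e] at h2
          exact h2
      · have c1 : Commute (cs.gen j) (cs.gen (a+2)) := (F.far (a+2) j (by omega) (by omega)).symm
        have c2 : Commute (cs.gen j) (cs.shatD (a+1)) :=
          ih (a+1) (by omega) (by omega) j (Or.inr (by omega))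
        exact (c1.mul_right c2).mul_right c1

lemma shat_sq (F : DFacts cs) : ∀ a, cs.shatD a * cs.shatD a = 1 := by
  intro a
  induction a using Nat.strong_induction_on with
  | _ a ih =>
    rcases a with _ | _ | a
    · rw [shatD_zero, one_mul]
    · rw [shatD_one,
        show (cs.gen 0 * cs.gen 1) * (cs.gen 0 * cs.gen 1)
          = cs.gen 0 * (cs.gen 1 * cs.gen 0) * cs.gen 1 by group,
        ← F.cu1.eq,
        show cs.gen 0 * (cs.gen 0 * cs.gen 1) * cs.gen 1
          = (cs.gen 0 * cs.gen 0) * (cs.gen 1 * cs.gen 1) by group,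
        F.sq 0, F.sq 1, one_mul]
    · rw [shatD_succ,
        show (cs.gen (a+2) * cs.shatD (a+1) * cs.gen (a+2)) *
            (cs.gen (a+2) * cs.shatD (a+1) * cs.gen (a+2))
          = cs.gen (a+2) * (cs.shatD (a+1) * (cs.gen (a+2) * cs.gen (a+2)) * cs.shatD (a+1)) *
            cs.gen (a+2) by group,
        F.sq (a+2), mul_one, ih (a+1) (by omega), mul_one, F.sq (a+2)]

/-- Adjacent `ŝ`'s commute. -/
lemma shat_comm_succ (F : DFacts cs) :
    ∀ a, a + 2 ≤ n → Commute (cs.shatD a) (cs.shatD (a+1)) := by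
  intro a
  induction a using Nat.strong_induction_on with
  | _ a ih =>
    rcases a with _ | _ | a
    · intro _
      exact (Commute.one_left _)
    · intro hle
      have hu1 : ∀ w : W, cs.gen 0*(cs.gen 1*w) = cs.gen 1*(cs.gen 0*w) := trailing2 F.cu1.eq
      have hbu := trailing F.bru
      have hb := trailing (F.br 1 le_rfl (by omega))
      obtain ⟨p1, p2⟩ := wordD1 hu1 hbu hb
      have e1 := p1 1
      have e2 := p2 1
      simp only [mul_one] at e1 e2
      show (cs.gen 0 * cs.gen 1) * (cs.gen 2 * (cs.gen 0 * cs.gen 1) * cs.gen 2)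
          = (cs.gen 2 * (cs.gen 0 * cs.gen 1) * cs.gen 2) * (cs.gen 0 * cs.gen 1)
      simp only [mul_assoc]
      rw [e1, e2]
    · intro hle
      have hB : Commute (cs.shatD (a+1)) (cs.shatD (a+2)) := ih (a+1) (by omega) (by omega)
      rw [show cs.shatD (a+2) = cs.gen (a+2) * cs.shatD (a+1) * cs.gen (a+2) from rfl] at hB
      have hqx : Commute (cs.gen (a+3)) (cs.shatD (a+1)) :=
        comm_gen_shat F (a+1) (by omega) (a+3) (Or.inr (by omega))
      have hpq := F.br (a+2) (by omega) (by omega)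
      have h1 := commute_conj (F.sq (a+3)) hB
      have e : cs.gen (a+3) * cs.shatD (a+1) * cs.gen (a+3) = cs.shatD (a+1) := by
        rw [hqx.eq, mul_assoc, F.sq (a+3), mul_one]
      rw [e] at h1
      have h2 := commute_conj (F.sq (a+2)) h1
      have e2 : cs.gen (a+2) *
          (cs.gen (a+3) * (cs.gen (a+2) * cs.shatD (a+1) * cs.gen (a+2)) * cs.gen (a+3)) *
          cs.gen (a+2)
          = cs.gen (a+3) * (cs.gen (a+2) * cs.shatD (a+1) * cs.gen (a+2)) * cs.gen (a+3) :=
        word_conj_braid (F.sq (a+3)) hpq hqx.eq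
      rw [e2] at h2
      exact h2

/-- All the `ŝ`'s commute with each other. -/
lemma shat_comm (F : DFacts cs) :
    ∀ a b, a + 1 ≤ n → b + 1 ≤ n → Commute (cs.shatD a) (cs.shatD b) := by
  have ordered : ∀ b a, a ≤ b → b + 1 ≤ n → Commute (cs.shatD a) (cs.shatD b) := by
    intro b
    induction b using Nat.strong_induction_on with
    | _ b ih =>
      intro a hab hbn
      rcases Nat.eq_or_lt_of_le hab with rfl | hlt
      · exact Commute.refl _
      · rcases Nat.eq_or_lt_of_le hlt with heq | hlt2
        · rw [← heq]
          exact shat_comm_succ F a (by omega)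
        · obtain ⟨b', rfl⟩ : ∃ b', b = b' + 2 := ⟨b - 2, by omega⟩
          rw [shatD_succ]
          have c1 : Commute (cs.shatD a) (cs.gen (b'+2)) :=
            (comm_gen_shat F a (by omega) (b'+2) (Or.inr (by omega))).symm
          have c2 : Commute (cs.shatD a) (cs.shatD (b'+1)) :=
            ih (b'+1) (by omega) a (by omega) (by omega)
          exact (c1.mul_right c2).mul_right c1
  intro a b han hbn
  rcases Nat.le_total a b with hab | hba
  · exact ordered b a hab hbn
  · exact (ordered a b hba han).symm

/-- Conjugating `ŝ_a` (`a ≥ 2`) by `s₁` gives `ŝ_a ŝ_1`. -/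
lemma gen_one_shat (F : DFacts cs) :
    ∀ a, 2 ≤ a → a + 1 ≤ n → cs.gen 1 * cs.shatD a * cs.gen 1 = cs.shatD a * cs.shatD 1 := by
  intro a
  induction a using Nat.strong_induction_on with
  | _ a ih =>
    rcases a with _ | _ | a
    · intro h2 _
      exact absurd h2 (by omega)
    · intro h2 _
      exact absurd h2 (by omega)
    · intro _ hle
      rcases a with _ | a
      · have hu1 : ∀ w : W, cs.gen 0*(cs.gen 1*w) = cs.gen 1*(cs.gen 0*w) := trailing2 F.cu1.eq
        have hbu := trailing F.bru
        have hb := trailing (F.br 1 le_rfl (by omega))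
        obtain ⟨p1, p2⟩ := wordD1 hu1 hbu hb
        have e2 := p2 1
        simp only [mul_one] at e2
        show cs.gen 1 * (cs.gen 2 * (cs.gen 0 * cs.gen 1) * cs.gen 2) * cs.gen 1
            = (cs.gen 2 * (cs.gen 0 * cs.gen 1) * cs.gen 2) * (cs.gen 0 * cs.gen 1)
        simp only [mul_assoc]
        exact e2.symm
      · have hcomm1 : Commute (cs.gen 1) (cs.gen (a+3)) := F.far 1 (a+3) le_rfl (by omega)
        have ihh := ih (a+2) (by omega) (by omega) (by omega)
        have hcsh : Commute (cs.gen (a+3)) (cs.shatD 1) :=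
          comm_gen_shat F 1 (by omega) (a+3) (Or.inr (by omega))
        show cs.gen 1 * cs.shatD (a+3) * cs.gen 1 = cs.shatD (a+3) * cs.shatD 1
        rw [show cs.shatD (a+3) = cs.gen (a+3) * cs.shatD (a+2) * cs.gen (a+3) from rfl]
        calc cs.gen 1 * (cs.gen (a+3) * cs.shatD (a+2) * cs.gen (a+3)) * cs.gen 1
            = cs.gen (a+3) * (cs.gen 1 * cs.shatD (a+2) * cs.gen 1) * cs.gen (a+3) :=
              conj_swap hcomm1.eq
          _ = cs.gen (a+3) * (cs.shatD (a+2) * cs.shatD 1) * cs.gen (a+3) := by rw [ihh]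
          _ = cs.gen (a+3) * cs.shatD (a+2) * cs.gen (a+3) * cs.shatD 1 := by
              rw [show cs.gen (a+3) * (cs.shatD (a+2) * cs.shatD 1) * cs.gen (a+3)
                  = cs.gen (a+3) * cs.shatD (a+2) * (cs.shatD 1 * cs.gen (a+3)) by group,
                ← hcsh.eq]
              group

/-- `s₁` commutes with a product `ŝ_a ŝ_b` for `a, b ≥ 2`. -/
lemma gen_one_pair (F : DFacts cs) (a b : ℕ) (ha : 2 ≤ a) (hb : 2 ≤ b)
    (han : a + 1 ≤ n) (hbn : b + 1 ≤ n) :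
    Commute (cs.gen 1) (cs.shatD a * cs.shatD b) := by
  apply commute_of_conj_fixed (F.sq 1)
  have e : cs.gen 1 * (cs.shatD a * cs.shatD b) * cs.gen 1
      = (cs.gen 1 * cs.shatD a * cs.gen 1) * (cs.gen 1 * cs.shatD b * cs.gen 1) := by
    rw [show (cs.gen 1 * cs.shatD a * cs.gen 1) * (cs.gen 1 * cs.shatD b * cs.gen 1)
        = cs.gen 1 * (cs.shatD a * ((cs.gen 1 * cs.gen 1) * cs.shatD b)) * cs.gen 1 by group,
      F.sq 1, one_mul]
  rw [e, gen_one_shat F a ha han, gen_one_shat F b hb hbn]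
  have c1 : cs.shatD 1 * cs.shatD b = cs.shatD b * cs.shatD 1 :=
    (shat_comm F 1 b (by omega) hbn).eq
  rw [show (cs.shatD a * cs.shatD 1) * (cs.shatD b * cs.shatD 1)
      = cs.shatD a * (cs.shatD 1 * cs.shatD b) * cs.shatD 1 by group, c1,
    show cs.shatD a * (cs.shatD b * cs.shatD 1) * cs.shatD 1
      = cs.shatD a * cs.shatD b * (cs.shatD 1 * cs.shatD 1) by group,
    shat_sq F 1, mul_one]

lemma negBlockD_def (m d : ℕ) :
    cs.negBlockD m d
      = cs.shatD m * ((List.range (d - 1)).map fun k => cs.gen (m + 1 + k)).prod := rfl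

/-- A negative block commutes with any `s_t` lying entirely above it. -/
lemma negBlock_comm_gen (F : DFacts cs) (m d t : ℕ) (hd : 1 ≤ d) (hm : m + 1 ≤ n)
    (ht : m + d + 1 ≤ t) :
    Commute (cs.negBlockD m d) (cs.gen t) := by
  rw [negBlockD_def]
  apply Commute.mul_left
  · exact (comm_gen_shat F m hm t (Or.inr (by omega))).symm
  · apply Commute.list_prod_left
    intro x hx
    simp only [List.mem_map, List.mem_range] at hx
    obtain ⟨kk, hkk, rfl⟩ := hx
    exact F.far (m+1+kk) t (by omega) (by omega)

/-- A negative block lying entirely below `a` commutes with a pair `ŝ_a ŝ_b`. -/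
lemma negBlock_comm_pair (F : DFacts cs) (m d a b : ℕ) (ha2 : 2 ≤ a) (hmd : m + d ≤ a)
    (hab : a ≤ b) (hbn : b + 1 ≤ n) :
    Commute (cs.negBlockD m d) (cs.shatD a * cs.shatD b) := by
  rw [negBlockD_def]
  apply Commute.mul_left
  · exact (shat_comm F m a (by omega) (by omega)).mul_right (shat_comm F m b (by omega) hbn)
  · apply Commute.list_prod_left
    intro x hx
    simp only [List.mem_map, List.mem_range] at hx
    obtain ⟨kk, hkk, rfl⟩ := hx
    by_cases h1 : m + 1 + kk = 1
    · rw [h1]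
      exact gen_one_pair F a b ha2 (by omega) (by omega) hbn
    · exact (comm_gen_shat F a (by omega) (m+1+kk) (Or.inl ⟨by omega, by omega⟩)).mul_right
        (comm_gen_shat F b hbn (m+1+kk) (Or.inl ⟨by omega, by omega⟩))

/-- Normal form of a pair of adjacent negative blocks: the two `ŝ`'s can be collected
to the front. -/
lemma negBlock_pair (F : DFacts cs) (a da b db : ℕ) (ha2 : 2 ≤ a) (hab : a + da = b)
    (hbn : b + 1 ≤ n) :
    cs.negBlockD a da * cs.negBlockD b db
      = (cs.shatD a * cs.shatD b) *
        (((List.range (da - 1)).map fun k => cs.gen (a + 1 + k)).prod *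
         ((List.range (db - 1)).map fun k => cs.gen (b + 1 + k)).prod) := by
  rw [negBlockD_def, negBlockD_def]
  set Ca := ((List.range (da - 1)).map fun k => cs.gen (a + 1 + k)).prod with hCa
  set Cb := ((List.range (db - 1)).map fun k => cs.gen (b + 1 + k)).prod with hCb
  have hc : Commute Ca (cs.shatD b) := by
    rw [hCa]
    apply Commute.list_prod_left
    intro x hx
    simp only [List.mem_map, List.mem_range] at hx
    obtain ⟨kk, hkk, rfl⟩ := hx
    exact comm_gen_shat F b hbn (a+1+kk) (Or.inl ⟨by omega, by omega⟩)
  calc (cs.shatD a * Ca) * (cs.shatD b * Cb)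
      = cs.shatD a * (Ca * cs.shatD b) * Cb := by group
    _ = cs.shatD a * (cs.shatD b * Ca) * Cb := by rw [hc.eq]
    _ = (cs.shatD a * cs.shatD b) * (Ca * Cb) := by group

end DAux

private lemma prod_range_double {G : Type*} [Monoid G] (f : ℕ → G) :
    ∀ k, ((List.range (2*k)).map f).prod
      = ((List.range k).map fun j => f (2*j) * f (2*j+1)).prod := by
  intro k
  induction k with
  | zero => rfl
  | succ k ih =>
    rw [show 2*(k+1) = (2*k+1)+1 by omega, List.range_succ, List.range_succ, List.range_succ,
      List.map_append, List.map_append, List.map_append, List.prod_append, List.prod_append,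
      List.prod_append, ih]
    simp [mul_assoc]

open DAux

/-- Let `(W,S)` be of type `Dₙ` and let `α` be a partition of `n` with an
even number `h = 2k` of nonzero parts `α₁ ≤ … ≤ α_h`.  With `b_i = b⁻(m_i, α_i)` and
`w_α = b₁ b₂ ⋯ b_h`, one has `w_α = (b_{h−1} b_h)(b_{h−3} b_{h−2}) ⋯ (b₃ b₄)(b₁ b₂)`;
in particular `w_α⁻¹ = (b₁ b₂)⁻¹ (b₃ b₄)⁻¹ ⋯ (b_{h−1} b_h)⁻¹`. -/
theorem walphaD_block_commutation {n : ℕ} {W : Type*} [Group W] (hn : 4 ≤ n)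
    {M : CoxeterMatrix (Fin n)}
    (hMu2 : ∀ h2 : 2 < n, M ⟨0, by omega⟩ ⟨2, h2⟩ = 3)
    (hMu1 : ∀ h1 : 1 < n, M ⟨0, by omega⟩ ⟨1, h1⟩ = 2)
    (hM3 : ∀ (j : ℕ) (h : j + 2 < n), M ⟨j + 1, by omega⟩ ⟨j + 2, h⟩ = 3)
    (hMu : ∀ j : Fin n, 3 ≤ (j : ℕ) → M ⟨0, by omega⟩ j = 2)
    (hM2 : ∀ i j : Fin n, 1 ≤ (i : ℕ) → (i : ℕ) + 1 < (j : ℕ) → M i j = 2)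
    (cs : CoxeterSystem M W) (h k : ℕ) (hhk : h = 2 * k) (hk : 1 ≤ k) (α : ℕ → ℕ)
    (hpos : ∀ i, 1 ≤ i → i ≤ h → 1 ≤ α i)
    (hmono : ∀ i j, 1 ≤ i → i ≤ j → j ≤ h → α i ≤ α j)
    (hsum : ∑ i ∈ Finset.Icc 1 h, α i = n) :
    ((List.range h).map fun i => cs.negBlockD (partSum α (i + 1)) (α (i + 1))).prod =
      ((List.range k).reverse.map fun j =>
        cs.negBlockD (partSum α (2 * j + 1)) (α (2 * j + 1)) *
        cs.negBlockD (partSum α (2 * j + 2)) (α (2 * j + 2))).prod ∧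
    (((List.range h).map fun i => cs.negBlockD (partSum α (i + 1)) (α (i + 1))).prod)⁻¹ =
      ((List.range k).map fun j =>
        (cs.negBlockD (partSum α (2 * j + 1)) (α (2 * j + 1)) *
         cs.negBlockD (partSum α (2 * j + 2)) (α (2 * j + 2)))⁻¹).prod := by
  subst hhk
  -- basic facts about the generators
  have hgen_lt : ∀ (i : ℕ) (hi : i < n), cs.gen i = cs.simple ⟨i, hi⟩ := by
    intro i hi; rw [CoxeterSystem.gen, dif_pos hi]
  have hgen_ge : ∀ i : ℕ, n ≤ i → cs.gen i = 1 := by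
    intro i hi; rw [CoxeterSystem.gen, dif_neg (by omega)]
  have hsq : ∀ i, cs.gen i * cs.gen i = 1 := by
    intro i
    by_cases hi : i < n
    · rw [hgen_lt i hi]; exact cs.simple_mul_simple_self _
    · rw [hgen_ge i (by omega), one_mul]
  have hcomm2 : ∀ (i j : ℕ) (hi : i < n) (hj : j < n), M ⟨i, hi⟩ ⟨j, hj⟩ = 2 →
      Commute (cs.gen i) (cs.gen j) := by
    intro i j hi hj hM
    rw [hgen_lt i hi, hgen_lt j hj]
    apply commute_of_sq_two (cs.simple_mul_simple_self _) (cs.simple_mul_simple_self _)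
    have := cs.simple_mul_simple_pow ⟨i, hi⟩ ⟨j, hj⟩
    rwa [hM] at this
  have hbraid3 : ∀ (i j : ℕ) (hi : i < n) (hj : j < n), M ⟨i, hi⟩ ⟨j, hj⟩ = 3 →
      cs.gen i * cs.gen j * cs.gen i = cs.gen j * cs.gen i * cs.gen j := by
    intro i j hi hj hM
    rw [hgen_lt i hi, hgen_lt j hj]
    apply braid_of_sq_three (cs.simple_mul_simple_self _) (cs.simple_mul_simple_self _)
    have := cs.simple_mul_simple_pow ⟨i, hi⟩ ⟨j, hj⟩
    rwa [hM] at this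
  have F : DFacts cs := by
    constructor
    · exact hsq
    · intro i j h1 h2
      by_cases hj : j < n
      · exact hcomm2 i j (by omega) hj (hM2 ⟨i, by omega⟩ ⟨j, hj⟩ h1 ((by omega : i + 1 < j) : _))
      · rw [hgen_ge j (by omega)]; exact Commute.one_right _
    · intro j h3
      by_cases hj : j < n
      · exact hcomm2 0 j (by omega) hj (hMu ⟨j, hj⟩ h3)
      · rw [hgen_ge j (by omega)]; exact Commute.one_right _
    · exact hcomm2 0 1 (by omega) (by omega) (hMu1 (by omega))
    · intro i h1 h2
      obtain ⟨j, rfl⟩ : ∃ j, i = j + 1 := ⟨i - 1, by omega⟩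
      exact hbraid3 (j+1) (j+2) (by omega) (by omega) (hM3 j (by omega))
    · exact hbraid3 0 2 (by omega) (by omega) (hMu2 (by omega))
  -- arithmetic facts about partial sums
  have psucc : ∀ i j : ℕ, i + 1 = j → 1 ≤ i → partSum α j = partSum α i + α i := by
    intro i j hj hi
    subst hj
    rw [partSum, partSum, Finset.sum_Ico_succ_top hi]
  have pmono : ∀ i j : ℕ, i ≤ j → partSum α i ≤ partSum α j := by
    intro i j hij
    exact Finset.sum_le_sum_of_subset (Finset.Ico_subset_Ico le_rfl hij)
  have ptop : partSum α (2*k+1) = n := by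
    rw [partSum, Finset.Ico_add_one_right_eq_Icc, hsum]
  have plb : ∀ i : ℕ, i ≤ 2*k + 1 → i - 1 ≤ partSum α i := by
    intro i hi
    have hcard : (Finset.Ico 1 i).card • 1 ≤ ∑ j ∈ Finset.Ico 1 i, α j := by
      apply Finset.card_nsmul_le_sum
      intro x hx
      simp only [Finset.mem_Ico] at hx
      exact hpos x hx.1 (by omega)
    simpa [Nat.card_Ico, partSum] using hcard
  -- pairwise commutation of the pairs
  have PComm : ∀ i j : ℕ, i < j → j < k →
      Commute
        (cs.negBlockD (partSum α (2*i+1)) (α (2*i+1)) *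
         cs.negBlockD (partSum α (2*i+2)) (α (2*i+2)))
        (cs.negBlockD (partSum α (2*j+1)) (α (2*j+1)) *
         cs.negBlockD (partSum α (2*j+2)) (α (2*j+2))) := by
    intro i j hij hjk
    have hm12 : partSum α (2*i+1) + α (2*i+1) = partSum α (2*i+2) :=
      (psucc (2*i+1) (2*i+2) (by omega) (by omega)).symm
    have hm23 : partSum α (2*i+2) + α (2*i+2) = partSum α (2*i+3) :=
      (psucc (2*i+2) (2*i+3) (by omega) (by omega)).symm
    have h23a : partSum α (2*i+3) ≤ partSum α (2*j+1) := pmono (2*i+3) (2*j+1) (by omega)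
    have hab' : partSum α (2*j+1) + α (2*j+1) = partSum α (2*j+2) :=
      (psucc (2*j+1) (2*j+2) (by omega) (by omega)).symm
    have hbdb : partSum α (2*j+2) + α (2*j+2) = partSum α (2*j+3) :=
      (psucc (2*j+2) (2*j+3) (by omega) (by omega)).symm
    have htopb : partSum α (2*j+3) ≤ n := by
      rw [← ptop]; exact pmono (2*j+3) (2*k+1) (by omega)
    have hdb1 : 1 ≤ α (2*j+2) := hpos (2*j+2) (by omega) (by omega)
    have hda1 : 1 ≤ α (2*j+1) := hpos (2*j+1) (by omega) (by omega)
    have hd11 : 1 ≤ α (2*i+1) := hpos (2*i+1) (by omega) (by omega)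
    have hd21 : 1 ≤ α (2*i+2) := hpos (2*i+2) (by omega) (by omega)
    have ha2 : 2 ≤ partSum α (2*j+1) := by
      have := plb (2*j+1) (by omega); omega
    have hbn : partSum α (2*j+2) + 1 ≤ n := by omega
    have haleb : partSum α (2*j+1) ≤ partSum α (2*j+2) := by omega
    rw [negBlock_pair F (partSum α (2*j+1)) (α (2*j+1)) (partSum α (2*j+2)) (α (2*j+2))
      ha2 hab' hbn]
    apply Commute.mul_right
    · apply Commute.mul_left
      · exact negBlock_comm_pair F _ _ _ _ ha2 (by omega) haleb hbn
      · exact negBlock_comm_pair F _ _ _ _ ha2 (by omega) haleb hbn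
    · apply Commute.mul_right
      · apply Commute.list_prod_right
        intro x hx
        simp only [List.mem_map, List.mem_range] at hx
        obtain ⟨kk, hkk, rfl⟩ := hx
        apply Commute.mul_left
        · exact negBlock_comm_gen F _ _ _ hd11 (by omega) (by omega)
        · exact negBlock_comm_gen F _ _ _ hd21 (by omega) (by omega)
      · apply Commute.list_prod_right
        intro x hx
        simp only [List.mem_map, List.mem_range] at hx
        obtain ⟨kk, hkk, rfl⟩ := hx
        apply Commute.mul_left
        · exact negBlock_comm_gen F _ _ _ hd11 (by omega) (by omega)
        · exact negBlock_comm_gen F _ _ _ hd21 (by omega) (by omega)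
  -- regroup the product of the 2k blocks into k pairs
  have grp := prod_range_double (fun i => cs.negBlockD (partSum α (i+1)) (α (i+1))) k
  have epair : (fun j => (fun i => cs.negBlockD (partSum α (i+1)) (α (i+1))) (2*j) *
      (fun i => cs.negBlockD (partSum α (i+1)) (α (i+1))) (2*j+1))
      = fun j => cs.negBlockD (partSum α (2*j+1)) (α (2*j+1)) *
          cs.negBlockD (partSum α (2*j+2)) (α (2*j+2)) := by
    funext j; rfl
  rw [epair] at grp
  -- pairwise commutation as a `List.Pairwise` statement
  have hpairwise : (((List.range k).map fun j =>
      cs.negBlockD (partSum α (2*j+1)) (α (2*j+1)) *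
      cs.negBlockD (partSum α (2*j+2)) (α (2*j+2)))).Pairwise Commute := by
    rw [List.pairwise_map]
    refine (List.pairwise_lt_range (n := k)).imp_of_mem ?_
    intro a b ha hb hlt
    exact PComm a b hlt (List.mem_range.mp hb)
  have main1 : ((List.range (2*k)).map fun i =>
      cs.negBlockD (partSum α (i+1)) (α (i+1))).prod =
      ((List.range k).reverse.map fun j =>
        cs.negBlockD (partSum α (2*j+1)) (α (2*j+1)) *
        cs.negBlockD (partSum α (2*j+2)) (α (2*j+2))).prod := by
    rw [grp, List.map_reverse]
    exact List.Perm.prod_eq' (List.reverse_perm _).symm hpairwise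
  refine ⟨main1, ?_⟩
  rw [main1, List.map_reverse, List.prod_inv_reverse, List.map_reverse, List.reverse_reverse,
    List.map_map]
  rfl
end

section
/- Let (W,S) be a finite Coxeter system, Γ a totally ordered abelian group, and L : W → Γ a weight function with L(s) ≥ 0 for all s ∈ S. Let ã : Irr(W) → Γ be the function defined recursively as in Definition 2. Then for every E ∈ Irr(W): (i) ã_E ≥ ã'_E ≥ 0; (ii) ã_{E ⊗ sgn} − ã_E = ω_L(E); and (iii) ã_E ≥ ã_M whenever J ⊊ S, M ∈ Irr(W_J) and M ↑ E. -/
open scoped Classical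

/-- A complex representation is irreducible: the space is nonzero and the only invariant
subspaces are `⊥` and `⊤`. -/
def IrreducibleRep {G : Type*} [Group G] {V : Type*} [AddCommGroup V] [Module ℂ V]
    (ρ : Representation ℂ G V) : Prop :=
  (∃ v : V, v ≠ 0) ∧
  ∀ U : Submodule ℂ V, (∀ g : G, ∀ v ∈ U, ρ g v ∈ U) → U = ⊥ ∨ U = ⊤

/-- `χ : W → ℂ` is the character of an irreducible complex representation of the parabolic
subgroup `W_I` (extended by `0` outside `W_I`). -/
def CoxeterSystem.IsIrrCharOf {B W : Type*} [Group W] {M : CoxeterMatrix B}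
    (cs : CoxeterSystem M W) (I : Set B) (χ : W → ℂ) : Prop :=
  ∃ (n : ℕ) (ρ : Representation ℂ (cs.parabolic I) (Fin n → ℂ)),
    IrreducibleRep ρ ∧
    ∀ w : W, χ w =
      if h : w ∈ cs.parabolic I then LinearMap.trace ℂ (Fin n → ℂ) (ρ ⟨w, h⟩) else 0

/-- The character of `E ⊗ sgn`, where `sgn` is the sign character `w ↦ (−1)^{ℓ(w)}`
(on a standard parabolic subgroup, the sign character is the restriction of that of `W`). -/
noncomputable def CoxeterSystem.sgnTwist {B W : Type*} [Group W] {M : CoxeterMatrix B}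
    (cs : CoxeterSystem M W) (χ : W → ℂ) : W → ℂ :=
  fun w => (-1 : ℂ) ^ cs.length w * χ w

/-- `M ↑ E`, for `M ∈ Irr(W_K)` with character `ψ` and `E` with character `χ`:
by Frobenius reciprocity, `E` is a constituent of the induction of `M` iff the inner
product `⟨ψ, χ|_{W_K}⟩` is nonzero. -/
def CoxeterSystem.Constituent {B W : Type*} [Group W] [Fintype W] {M : CoxeterMatrix B}
    (cs : CoxeterSystem M W) (K : Set B) (ψ χ : W → ℂ) : Prop :=
  ∑ w : W, (if w ∈ cs.parabolic K then ψ w * χ w⁻¹ else 0) ≠ 0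

/-- `g = ω_L(χ)` for a character `χ` of the parabolic subgroup `W_I`: there is a set `R ⊆ I`
of representatives of the `W_I`-conjugacy classes of the simple reflections `s_i`, `i ∈ I`,
and integers `z j = N_{s_j} · χ(s_j) / χ(1)` (where `N_{s_j}` is the size of the
`W_I`-conjugacy class of `s_j`), such that `g = ∑_{j ∈ R} z j • L(s_j)`. -/
def CoxeterSystem.IsOmega {B W : Type*} [Group W] [Fintype W] {M : CoxeterMatrix B}
    (cs : CoxeterSystem M W) {Γ : Type*} [AddCommGroup Γ] (c : B → Γ)
    (I : Set B) (χ : W → ℂ) (g : Γ) : Prop :=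
  ∃ (R : Finset B) (z : B → ℤ),
    (↑R : Set B) ⊆ I ∧
    (∀ i ∈ I, ∃! j, j ∈ R ∧ ∃ x ∈ cs.parabolic I, x * cs.simple i * x⁻¹ = cs.simple j) ∧
    (∀ j ∈ R, (z j : ℂ) * χ 1 =
      (Nat.card {x : W // ∃ y ∈ cs.parabolic I, y * cs.simple j * y⁻¹ = x} : ℂ) *
        χ (cs.simple j)) ∧
    g = ∑ j ∈ R, z j • c j

/-! ### Auxiliary lemmas -/

section AuxInt

variable {W : Type*} [Group W] [Fintype W]

private lemma involution_of_isConj {s x : W} (hs : s * s = 1) (h : IsConj s x) : x * x = 1 := by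
  obtain ⟨u, hu⟩ := isConj_iff.mp h
  have h2 : (u * s * u⁻¹) * (u * s * u⁻¹) = u * (s * s) * u⁻¹ := by group
  rw [← hu, h2, hs, mul_one, mul_inv_cancel]

private lemma isConj_inv_iff {s x : W} (hs : s * s = 1) : IsConj s x⁻¹ ↔ IsConj s x := by
  constructor
  · intro h
    have h3 : x⁻¹ = x := by
      have h4 := inv_eq_of_mul_eq_one_right (involution_of_isConj hs h)
      rw [inv_inv] at h4
      exact h4.symm
    rwa [h3] at h
  · intro h
    have h3 : x⁻¹ = x := inv_eq_of_mul_eq_one_right (involution_of_isConj hs h)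
    rwa [h3]

set_option maxHeartbeats 2000000 in
/-- Key integrality result: for an irreducible representation `ρ` of a finite group and an
involution `s`, the number `|class of s| · χ(s) / χ(1)` is an integer. -/
private lemma trace_int_of_involution {n : ℕ}
    (ρ : Representation ℂ W (Fin n → ℂ)) (hirr : IrreducibleRep ρ) {s : W} (hs : s * s = 1) :
    ∃ z : ℤ, (z : ℂ) * LinearMap.trace ℂ (Fin n → ℂ) (ρ 1) =
      ((Finset.univ.filter (fun x : W => IsConj s x)).card : ℂ) *
        LinearMap.trace ℂ (Fin n → ℂ) (ρ s) := by
  classical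
  obtain ⟨v, hv⟩ := hirr.1
  haveI : Nontrivial (Fin n → ℂ) := nontrivial_of_ne v 0 hv
  have hn : n ≠ 0 := by
    rintro rfl
    exact hv (Subsingleton.elim v 0)
  set C : Finset W := Finset.univ.filter (fun x => IsConj s x) with hC
  have hmemC : ∀ x, x ∈ C ↔ IsConj s x := by intro x; simp [hC]
  set T : Module.End ℂ (Fin n → ℂ) := ∑ x ∈ C, ρ x with hT
  -- `T` commutes with the representation
  have hcomm : ∀ g : W, ρ g * T = T * ρ g := by
    intro g
    have h1 : ρ g * T = ∑ x ∈ C, ρ (g * x) := by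
      rw [hT, Finset.mul_sum]
      exact Finset.sum_congr rfl fun x _ => (map_mul ρ g x).symm
    have h2 : T * ρ g = ∑ x ∈ C, ρ (x * g) := by
      rw [hT, Finset.sum_mul]
      exact Finset.sum_congr rfl fun x _ => (map_mul ρ x g).symm
    rw [h1, h2]
    refine Finset.sum_nbij' (fun x => g * x * g⁻¹) (fun y => g⁻¹ * y * g) ?_ ?_ ?_ ?_ ?_
    · intro x hx
      rw [hmemC] at hx ⊢
      exact hx.trans (isConj_iff.mpr ⟨g, rfl⟩)
    · intro y hy
      rw [hmemC] at hy ⊢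
      exact hy.trans (isConj_iff.mpr ⟨g⁻¹, by group⟩)
    · intro x _; group
    · intro y _; group
    · intro x _
      congr 1
      group
  -- `T` is multiplication by a scalar `μ`
  obtain ⟨μ, hμ⟩ := Module.End.exists_eigenvalue T
  have hUinv : ∀ (g : W), ∀ w ∈ T.eigenspace μ, ρ g w ∈ T.eigenspace μ := by
    intro g w hw
    rw [Module.End.mem_eigenspace_iff] at hw ⊢
    have h := congrArg (fun F : Module.End ℂ (Fin n → ℂ) => F w) (hcomm g)
    simp only [Module.End.mul_apply] at h
    rw [← h, hw, map_smul]
  have hTsmul : ∀ w : Fin n → ℂ, T w = μ • w := by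
    rcases hirr.2 _ hUinv with hbot | htop2
    · exact absurd hbot hμ
    · intro w
      exact Module.End.mem_eigenspace_iff.mp (htop2 ▸ Submodule.mem_top)
  -- trace computations
  have htrT : LinearMap.trace ℂ (Fin n → ℂ) T
      = (C.card : ℂ) * LinearMap.trace ℂ (Fin n → ℂ) (ρ s) := by
    rw [hT, map_sum]
    rw [Finset.sum_congr rfl (fun x hx => ?_), Finset.sum_const, nsmul_eq_mul]
    obtain ⟨u, hu⟩ := isConj_iff.mp ((hmemC x).mp hx)
    rw [← hu, map_mul ρ (u * s) u⁻¹, map_mul ρ u s, LinearMap.trace_mul_comm, ← mul_assoc,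
      ← map_mul ρ u⁻¹ u, inv_mul_cancel, map_one, one_mul]
  have htrT2 : LinearMap.trace ℂ (Fin n → ℂ) T = μ * n := by
    have hTeq : T = μ • (1 : Module.End ℂ (Fin n → ℂ)) := by
      apply LinearMap.ext
      intro w
      rw [hTsmul w]
      simp
    rw [hTeq, map_smul, LinearMap.trace_one, Module.finrank_fin_fun, smul_eq_mul]
  -- the trace of `ρ s` is an integer
  set p : Module.End ℂ (Fin n → ℂ) := ρ s with hpdef
  have hp2 : p * p = 1 := by rw [hpdef, ← map_mul, hs, map_one]
  set q : Module.End ℂ (Fin n → ℂ) := (2⁻¹ : ℂ) • (1 + p) with hq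
  have hqq : q ∘ₗ q = q := by
    have h1 : (1 + p) * (1 + p) = (2 : ℂ) • (1 + p) := by
      simp only [mul_add, add_mul, one_mul, mul_one, hp2, two_smul, smul_add]
      abel
    show q * q = q
    rw [hq, smul_mul_assoc, mul_smul_comm, smul_smul, h1, smul_smul]
    norm_num
  obtain ⟨m, hm⟩ := (LinearMap.isProj_iff_isIdempotentElem q).mpr hqq
  have htrq : LinearMap.trace ℂ (Fin n → ℂ) q = (Module.finrank ℂ m : ℂ) := hm.trace
  have htrp : LinearMap.trace ℂ (Fin n → ℂ) p = 2 * (Module.finrank ℂ m : ℂ) - n := by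
    have h2 : LinearMap.trace ℂ (Fin n → ℂ) q
        = 2⁻¹ * ((n : ℂ) + LinearMap.trace ℂ (Fin n → ℂ) p) := by
      rw [hq, map_smul, map_add, LinearMap.trace_one, Module.finrank_fin_fun, smul_eq_mul]
    rw [h2] at htrq
    have h2' : (2 : ℂ) ≠ 0 := two_ne_zero
    field_simp at htrq
    linear_combination htrq
  set k : ℤ := 2 * (Module.finrank ℂ m : ℤ) - n with hk
  have hkp : (k : ℂ) = LinearMap.trace ℂ (Fin n → ℂ) p := by
    rw [htrp, hk]; push_cast; ring
  -- `μ` is an algebraic integer: it is an eigenvalue of an integer matrix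
  obtain ⟨i0, hi0⟩ : ∃ i, v i ≠ 0 := by
    by_contra h
    push_neg at h
    exact hv (funext h)
  set f : W → ℂ := fun g => ρ g v i0 with hf
  have hfne : f ≠ 0 := by
    intro h
    have h1 := congrFun h 1
    rw [hf] at h1
    simp only [map_one, Module.End.one_apply, Pi.zero_apply] at h1
    exact hi0 h1
  set Mz : Matrix W W ℤ := fun g h => if IsConj s (g * h⁻¹) then 1 else 0 with hMz
  set Mc : Matrix W W ℂ := Mz.map (Int.cast) with hMc
  have hMcV : Mc.mulVec f = μ • f := by
    funext g
    have hstep1 : Mc.mulVec f g = ∑ x : W, (if IsConj s x then (1:ℂ) else 0) * f (x * g) := by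
      simp only [Matrix.mulVec, dotProduct]
      refine (Fintype.sum_equiv (Equiv.mulRight g) _ _ ?_).symm
      intro x
      have hx : g * (x * g)⁻¹ = x⁻¹ := by group
      simp only [Equiv.coe_mulRight, hMc, Matrix.map_apply]
      simp only [hMz, hx]
      have hiff := isConj_inv_iff (x := x) hs
      by_cases hcx : IsConj s x
      · rw [if_pos hcx, if_pos (hiff.mpr hcx)]
        simp
      · rw [if_neg hcx, if_neg (fun hc => hcx (hiff.mp hc))]
        simp
    have hstep2 : ∑ x : W, (if IsConj s x then (1:ℂ) else 0) * f (x * g)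
        = ∑ x ∈ C, f (x * g) := by
      rw [hC, Finset.sum_filter]
      exact Finset.sum_congr rfl fun x _ => by split_ifs <;> simp
    have hstep3 : ∑ x ∈ C, f (x * g) = T (ρ g v) i0 := by
      rw [hT, LinearMap.sum_apply, Finset.sum_apply]
      refine Finset.sum_congr rfl fun x _ => ?_
      show (ρ (x * g)) v i0 = _
      rw [map_mul ρ x g]
      rfl
    rw [hstep1, hstep2, hstep3, hTsmul (ρ g v)]
    rw [hf]
    simp
  have hdet : (Mc - μ • 1).det = 0 := by
    rw [← Matrix.exists_mulVec_eq_zero_iff]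
    refine ⟨f, hfne, ?_⟩
    rw [Matrix.sub_mulVec, Matrix.smul_mulVec, Matrix.one_mulVec, hMcV, sub_self]
  have hint : IsIntegral ℤ μ := by
    refine ⟨Mz.charpoly, Mz.charpoly_monic, ?_⟩
    rw [← Polynomial.aeval_def]
    have h1 : (Polynomial.aeval μ) Mz.charpoly = Mc.charpoly.eval μ := by
      rw [Polynomial.aeval_def, ← Polynomial.eval_map, hMc]
      rw [show ((Int.cast : ℤ → ℂ) : ℤ → ℂ) = ⇑(algebraMap ℤ ℂ) from rfl]
      rw [show Mz.map ⇑(algebraMap ℤ ℂ) = Mz.map (algebraMap ℤ ℂ) from rfl]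
      rw [Matrix.charpoly_map]
    rw [h1]
    have h2 : Mc.charpoly.eval μ = (μ • (1 : Matrix W W ℂ) - Mc).det := by
      rw [Matrix.charpoly, ← Polynomial.coe_evalRingHom, RingHom.map_det]
      congr 1
      ext g h
      by_cases hgh : g = h
      · subst hgh
        simp [Matrix.charmatrix_apply_eq, Matrix.one_apply, Matrix.smul_apply, Matrix.sub_apply]
      · simp [Matrix.charmatrix_apply_ne _ _ _ hgh, Matrix.one_apply_ne hgh,
          Matrix.smul_apply, Matrix.sub_apply]
    rw [h2, (neg_sub Mc (μ • 1)).symm, Matrix.det_neg, hdet,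
      mul_zero]
  -- `μ` is rational, hence an integer
  have hμn : μ * n = (C.card : ℂ) * (k : ℂ) := by
    rw [hkp, ← htrT, htrT2]
  have hrat : algebraMap ℚ ℂ ((C.card * k : ℚ) / n) = μ := by
    have hn' : (n : ℂ) ≠ 0 := Nat.cast_ne_zero.mpr hn
    push_cast
    field_simp
    have hkk : (Algebra.cast (k : ℚ) : ℂ) = (k : ℂ) := map_intCast (algebraMap ℚ ℂ) k
    linear_combination -hμn + (C.card : ℂ) * hkk
  have hqint : IsIntegral ℤ ((C.card * k : ℚ) / n) := by
    rw [← isIntegral_algebraMap_iff (algebraMap ℚ ℂ).injective, hrat]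
    exact hint
  obtain ⟨z, hz⟩ := IsIntegrallyClosed.isIntegral_iff.mp hqint
  refine ⟨z, ?_⟩
  have hzc : (z : ℂ) = μ := by
    rw [← hrat, ← hz, ← IsScalarTower.algebraMap_apply ℤ ℚ ℂ]
    exact (eq_intCast (algebraMap ℤ ℂ) z).symm
  rw [map_one, LinearMap.trace_one, Module.finrank_fin_fun, hzc, hμn, hkp]

end AuxInt

section AuxCox

variable {B W : Type*} [Group W] [Fintype W] {M : CoxeterMatrix B} (cs : CoxeterSystem M W)

private lemma parabolic_univ_top : cs.parabolic Set.univ = ⊤ := by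
  rw [CoxeterSystem.parabolic, Set.image_univ, cs.subgroup_closure_range_simple]

private lemma mem_parabolic_univ (w : W) : w ∈ cs.parabolic Set.univ := by
  rw [parabolic_univ_top]
  exact Subgroup.mem_top w

/-- The sign character is multiplicative. -/
private lemma sgn_mul (v w : W) :
    ((-1 : ℂ)) ^ cs.length (v * w) = (-1) ^ cs.length v * (-1) ^ cs.length w := by
  rw [← pow_add]
  have h := cs.length_mul_mod_two v w
  conv_lhs => rw [← Nat.div_add_mod (cs.length (v * w)) 2]
  conv_rhs => rw [← Nat.div_add_mod (cs.length v + cs.length w) 2]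
  rw [pow_add, pow_add, pow_mul, pow_mul, h]
  norm_num

/-- Existence of `ω_L(E)` for an irreducible character of `W`; this includes the classical
integrality of the coefficients `N_s χ(s)/χ(1)`. -/
private lemma omega_exists [Nonempty B] {Γ : Type*} [AddCommGroup Γ] (c : B → Γ) (E : W → ℂ)
    (hE : cs.IsIrrCharOf Set.univ E) : ∃ g, cs.IsOmega c Set.univ E g := by
  classical
  obtain ⟨n, ρ, hirr, hχ⟩ := hE
  let ι : W →* cs.parabolic Set.univ :=
    { toFun := fun w => ⟨w, mem_parabolic_univ cs w⟩
      map_one' := rfl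
      map_mul' := fun _ _ => rfl }
  let ρW : Representation ℂ W (Fin n → ℂ) := ρ.comp ι
  have hρW : ∀ w, E w = LinearMap.trace ℂ (Fin n → ℂ) (ρW w) := by
    intro w
    rw [hχ w, dif_pos (mem_parabolic_univ cs w)]
    rfl
  have hirrW : IrreducibleRep ρW := by
    refine ⟨hirr.1, fun U hU => hirr.2 U ?_⟩
    intro g v hv
    have hg : ρ g = ρW (g : W) := by
      have : ι (g : W) = g := Subtype.ext rfl
      show ρ g = ρ (ι (g : W))
      rw [this]
    rw [hg]
    exact hU (g : W) v hv
  -- integrality of the coefficients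
  have hzex : ∀ j : B, ∃ z : ℤ, (z : ℂ) * E 1 =
      ((Nat.card {x : W // ∃ y ∈ cs.parabolic Set.univ, y * cs.simple j * y⁻¹ = x}) : ℂ) *
        E (cs.simple j) := by
    intro j
    obtain ⟨z, hz⟩ := trace_int_of_involution ρW hirrW (cs.simple_mul_simple_self j)
    refine ⟨z, ?_⟩
    have hcard : Nat.card {x : W // ∃ y ∈ cs.parabolic Set.univ, y * cs.simple j * y⁻¹ = x}
        = (Finset.univ.filter (fun x : W => IsConj (cs.simple j) x)).card := by
      have hequiv : ∀ x : W, (∃ y ∈ cs.parabolic Set.univ, y * cs.simple j * y⁻¹ = x)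
          ↔ IsConj (cs.simple j) x := by
        intro x
        constructor
        · rintro ⟨y, -, hy⟩
          exact isConj_iff.mpr ⟨y, hy⟩
        · intro h
          obtain ⟨y, hy⟩ := isConj_iff.mp h
          exact ⟨y, mem_parabolic_univ cs y, hy⟩
      rw [Nat.card_congr (Equiv.subtypeEquivRight hequiv), Nat.card_eq_fintype_card,
        Fintype.card_subtype]
    rw [hρW 1, hρW (cs.simple j), hcard]
    exact hz
  choose z hz using hzex
  -- a set of representatives of the conjugacy classes of the simple reflections
  let pick : ConjClasses W → B := fun qc =>
    if h : ∃ j : B, ConjClasses.mk (cs.simple j) = qc then h.choose else Classical.arbitrary B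
  have hpick : ∀ qc : ConjClasses W, (∃ j : B, ConjClasses.mk (cs.simple j) = qc) →
      ConjClasses.mk (cs.simple (pick qc)) = qc := by
    intro qc h
    simp only [pick, dif_pos h]
    exact h.choose_spec
  let R : Finset B :=
    (Finset.univ.filter (fun w : W => ∃ i : B, cs.simple i = w)).image
      (fun w => pick (ConjClasses.mk w))
  have hconj_iff : ∀ i j : B,
      (∃ x ∈ cs.parabolic Set.univ, x * cs.simple i * x⁻¹ = cs.simple j)
        ↔ IsConj (cs.simple i) (cs.simple j) := by
    intro i j
    constructor
    · rintro ⟨x, -, hx⟩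
      exact isConj_iff.mpr ⟨x, hx⟩
    · intro h
      obtain ⟨x, hx⟩ := isConj_iff.mp h
      exact ⟨x, mem_parabolic_univ cs x, hx⟩
  refine ⟨∑ j ∈ R, z j • c j, R, z, Set.subset_univ _, ?_, fun j _ => hz j, rfl⟩
  intro i _
  refine ⟨pick (ConjClasses.mk (cs.simple i)), ⟨?_, ?_⟩, ?_⟩
  · apply Finset.mem_image_of_mem
    simp only [Finset.mem_filter, Finset.mem_univ, true_and]
    exact ⟨i, rfl⟩
  · rw [hconj_iff]
    have h := hpick (ConjClasses.mk (cs.simple i)) ⟨i, rfl⟩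
    exact (ConjClasses.mk_eq_mk_iff_isConj.mp h).symm
  · rintro j' ⟨hj'R, hconj⟩
    rw [hconj_iff] at hconj
    obtain ⟨w, hw, hww⟩ := Finset.mem_image.mp hj'R
    obtain ⟨i₀, hi₀⟩ := (Finset.mem_filter.mp hw).2
    subst hi₀
    have h1 : ConjClasses.mk (cs.simple j') = ConjClasses.mk (cs.simple i₀) := by
      rw [← hww]
      exact hpick _ ⟨i₀, rfl⟩
    have h2 : ConjClasses.mk (cs.simple j') = ConjClasses.mk (cs.simple i) :=
      ConjClasses.mk_eq_mk_iff_isConj.mpr hconj.symm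
    rw [← hww]
    congr 1
    rw [← h1, h2]

/-- Twisting by the sign character preserves irreducible characters (of `W` itself). -/
private lemma sgnTwist_irrChar {E : W → ℂ} (hE : cs.IsIrrCharOf Set.univ E) :
    cs.IsIrrCharOf Set.univ (cs.sgnTwist E) := by
  obtain ⟨n, ρ, hirr, hχ⟩ := hE
  refine ⟨n, ⟨⟨fun g => ((-1 : ℂ) ^ cs.length (g : W)) • ρ g, ?_⟩, ?_⟩, ⟨hirr.1, ?_⟩, ?_⟩
  · show ((-1 : ℂ) ^ cs.length ((1 : cs.parabolic Set.univ) : W)) • ρ 1 = 1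
    rw [OneMemClass.coe_one, cs.length_one, pow_zero, map_one, one_smul]
  · intro a b
    show ((-1 : ℂ) ^ cs.length ((a : W) * (b : W))) • ρ (a * b) = _
    rw [sgn_mul, map_mul, smul_mul_assoc, mul_smul_comm, smul_smul]
  · intro U hU
    refine hirr.2 U ?_
    intro g v hv
    have h1 := hU g v hv
    have h2 : ρ g v = ((-1 : ℂ) ^ cs.length (g : W)) •
        (((-1 : ℂ) ^ cs.length (g : W)) • ρ g v) := by
      rw [smul_smul, ← mul_pow]
      norm_num
    rw [h2]
    exact Submodule.smul_mem U _ h1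
  · intro w
    rw [CoxeterSystem.sgnTwist, hχ w, dif_pos (mem_parabolic_univ cs w),
      dif_pos (mem_parabolic_univ cs w)]
    show (-1 : ℂ) ^ cs.length w * LinearMap.trace ℂ (Fin n → ℂ) (ρ ⟨w, _⟩)
      = LinearMap.trace ℂ (Fin n → ℂ) (((-1 : ℂ) ^ cs.length w) • ρ ⟨w, _⟩)
    rw [map_smul, smul_eq_mul]

private lemma isOmega_sgnTwist {Γ : Type*} [AddCommGroup Γ] (c : B → Γ) {E : W → ℂ} {g : Γ}
    (h : cs.IsOmega c Set.univ E g) : cs.IsOmega c Set.univ (cs.sgnTwist E) (-g) := by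
  obtain ⟨R, z, hsub, huniq, hzc, rfl⟩ := h
  refine ⟨R, fun j => -(z j), hsub, huniq, ?_, ?_⟩
  · intro j hj
    have h1 := hzc j hj
    simp only [CoxeterSystem.sgnTwist, cs.length_one, cs.length_simple, pow_zero, pow_one,
      one_mul, Int.cast_neg]
    linear_combination -h1
  · rw [← Finset.sum_neg_distrib]
    exact Finset.sum_congr rfl fun j _ => (neg_smul _ _).symm

private lemma sgnTwist_sgnTwist (E : W → ℂ) : cs.sgnTwist (cs.sgnTwist E) = E := by
  funext w
  simp only [CoxeterSystem.sgnTwist, ← mul_assoc, ← mul_pow]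
  norm_num

/-- The trivial character of the trivial parabolic subgroup is a constituent of any
irreducible character of `W`. -/
private lemma exists_trivial_constituent {E : W → ℂ} (hE : cs.IsIrrCharOf Set.univ E) :
    ∃ ψ : W → ℂ, cs.IsIrrCharOf ∅ ψ ∧ cs.Constituent ∅ ψ E := by
  classical
  have hbot : cs.parabolic (∅ : Set B) = ⊥ := by
    rw [CoxeterSystem.parabolic, Set.image_empty, Subgroup.closure_empty]
  have hE1 : E 1 ≠ 0 := by
    obtain ⟨n, ρ, hirr, hχ⟩ := hE
    rw [hχ 1, dif_pos (one_mem _)]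
    have h1 : (⟨1, one_mem _⟩ : cs.parabolic Set.univ) = 1 := rfl
    rw [h1, map_one, LinearMap.trace_one, Module.finrank_fin_fun]
    obtain ⟨v, hv⟩ := hirr.1
    have hn : n ≠ 0 := by
      rintro rfl
      exact hv (Subsingleton.elim v 0)
    exact_mod_cast hn
  refine ⟨fun w => if w = 1 then 1 else 0, ⟨1, 1, ⟨⟨fun i => 1, ?_⟩, ?_⟩, ?_⟩, ?_⟩
  · intro h
    have := congrFun h 0
    simp at this
  · intro U hU
    by_cases hU0 : U = ⊥
    · exact Or.inl hU0
    · refine Or.inr ?_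
      obtain ⟨u, huU, hu0⟩ := Submodule.exists_mem_ne_zero_of_ne_bot hU0
      have hu00 : u 0 ≠ 0 := by
        intro h
        apply hu0
        funext i
        rw [Subsingleton.elim i 0, h]
        rfl
      rw [Submodule.eq_top_iff']
      intro x
      have hx : x = (x 0 * (u 0)⁻¹) • u := by
        funext i
        rw [Subsingleton.elim i 0]
        simp only [Pi.smul_apply, smul_eq_mul]
        rw [mul_assoc, inv_mul_cancel₀ hu00, mul_one]
      rw [hx]
      exact Submodule.smul_mem U _ huU
  · intro w
    show (if w = 1 then (1:ℂ) else 0) = _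
    by_cases hw : w = 1
    · subst hw
      rw [if_pos rfl, dif_pos (one_mem _)]
      show (1 : ℂ) = LinearMap.trace ℂ (Fin 1 → ℂ) 1
      rw [LinearMap.trace_one, Module.finrank_fin_fun]
      norm_num
    · rw [if_neg hw, dif_neg]
      rw [hbot, Subgroup.mem_bot]
      exact hw
  · show (∑ w : W, _) ≠ 0
    have hsum : ∑ w : W, (if w ∈ cs.parabolic (∅ : Set B)
        then (if w = 1 then (1:ℂ) else 0) * E w⁻¹ else 0) = E 1 := by
      rw [Finset.sum_eq_single 1]
      · rw [if_pos (one_mem _), if_pos rfl, inv_one, one_mul]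
      · intro b _ hb
        rw [if_neg]
        rw [hbot, Subgroup.mem_bot]
        exact hb
      · intro h
        exact absurd (Finset.mem_univ 1) h
    rw [hsum]
    exact hE1

end AuxCox

/-- Let `(W,S)` be a finite Coxeter system, `Γ` a totally ordered abelian
group and `L` a weight function with values `c i = L(s_i) ≥ 0`.  Let `ã = A` (with auxiliary
function `ã' = A'`) be the function on irreducible characters of the parabolic subgroups of
`W` defined recursively as in Definition 2 of the paper:
`A ∅ = 0`; for `I ≠ ∅`, `A' I χ` is the maximum of the values `A K ψ` over all proper
`K ⊊ I` and all `ψ ∈ Irr(W_K)` with `ψ ↑ χ`; and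
`A I χ = A' I χ` if `A' I (χ ⊗ sgn) − A' I χ ≤ ω_L(χ)`, and
`A I χ = A' I (χ ⊗ sgn) − ω_L(χ)` otherwise.
Then for every `E ∈ Irr(W)`:
(i) `ã_E ≥ ã'_E ≥ 0`; (ii) `ã_{E ⊗ sgn} − ã_E = ω_L(E)`; and (iii) `ã_E ≥ ã_M` whenever
`J ⊊ S`, `M ∈ Irr(W_J)` and `M ↑ E`. -/
theorem atilde_properties {B W : Type*} [Group W] [Fintype W] [Nonempty B]
    {M : CoxeterMatrix B} (cs : CoxeterSystem M W)
    {Γ : Type*} [AddCommGroup Γ] [LinearOrder Γ] [IsOrderedAddMonoid Γ]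
    (c : B → Γ) (hc0 : ∀ i, 0 ≤ c i)
    (hcconj : ∀ i j : B, IsConj (cs.simple i) (cs.simple j) → c i = c j)
    (A A' : Set B → (W → ℂ) → Γ)
    (hbase : ∀ χ, cs.IsIrrCharOf ∅ χ → A ∅ χ = 0)
    (hA' : ∀ (I : Set B) (χ : W → ℂ), cs.IsIrrCharOf I χ → I ≠ ∅ →
      IsGreatest {g : Γ | ∃ K, K ⊂ I ∧ ∃ ψ, cs.IsIrrCharOf K ψ ∧ cs.Constituent K ψ χ ∧
        g = A K ψ} (A' I χ))
    (hrec : ∀ (I : Set B) (χ : W → ℂ), cs.IsIrrCharOf I χ → I ≠ ∅ →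
      ∀ g : Γ, cs.IsOmega c I χ g →
        A I χ = if A' I (cs.sgnTwist χ) - A' I χ ≤ g then A' I χ
          else A' I (cs.sgnTwist χ) - g)
    (E : W → ℂ) (hE : cs.IsIrrCharOf Set.univ E) :
    (A' Set.univ E ≤ A Set.univ E ∧ 0 ≤ A' Set.univ E) ∧
    (∀ g : Γ, cs.IsOmega c Set.univ E g →
      A Set.univ (cs.sgnTwist E) - A Set.univ E = g) ∧
    (∀ K : Set B, K ⊂ Set.univ → ∀ ψ : W → ℂ, cs.IsIrrCharOf K ψ →
      cs.Constituent K ψ E → A K ψ ≤ A Set.univ E) := by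
  classical
  have hne : (Set.univ : Set B) ≠ ∅ := by
    intro h
    rw [Set.univ_eq_empty_iff] at h
    exact h.elim (Classical.arbitrary B)
  have hGreat := hA' Set.univ E hE hne
  -- `0 ≤ A' Set.univ E`
  obtain ⟨ψ₀, hψ₀, hψ₀c⟩ := exists_trivial_constituent cs hE
  have hss : (∅ : Set B) ⊂ Set.univ :=
    Set.ssubset_iff_subset_ne.mpr ⟨Set.empty_subset _, fun h => hne h.symm⟩
  have hzero : (0 : Γ) ≤ A' Set.univ E :=
    hGreat.2 ⟨∅, hss, ψ₀, hψ₀, hψ₀c, (hbase ψ₀ hψ₀).symm⟩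
  -- set-up for the recursion
  have hEσ := sgnTwist_irrChar cs hE
  have hσσ : cs.sgnTwist (cs.sgnTwist E) = E := sgnTwist_sgnTwist cs E
  obtain ⟨g₀, hg₀⟩ := omega_exists cs c E hE
  have hrecE : ∀ g : Γ, cs.IsOmega c Set.univ E g →
      A Set.univ E = if A' Set.univ (cs.sgnTwist E) - A' Set.univ E ≤ g then A' Set.univ E
        else A' Set.univ (cs.sgnTwist E) - g :=
    fun g hg => hrec _ _ hE hne g hg
  -- (i)  `A' ≤ A`
  have hA'leA : A' Set.univ E ≤ A Set.univ E := by
    rw [hrecE g₀ hg₀]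
    split_ifs with h
    · exact le_refl _
    · have h' : g₀ < A' Set.univ (cs.sgnTwist E) - A' Set.univ E := not_le.mp h
      have h3 : g₀ + A' Set.univ E < A' Set.univ (cs.sgnTwist E) := lt_sub_iff_add_lt.mp h'
      have h4 : A' Set.univ E + g₀ < A' Set.univ (cs.sgnTwist E) := by rwa [add_comm] at h3
      exact le_of_lt (lt_sub_iff_add_lt.mpr h4)
  refine ⟨⟨hA'leA, hzero⟩, ?_, ?_⟩
  · -- (ii)
    intro g hg
    have h1 := hrecE g hg
    have h2 := hrec Set.univ (cs.sgnTwist E) hEσ hne (-g) (isOmega_sgnTwist cs c hg)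
    rw [hσσ] at h2
    set a := A' Set.univ E with ha
    set b := A' Set.univ (cs.sgnTwist E) with hb
    by_cases hc1 : b - a ≤ g
    · rw [if_pos hc1] at h1
      by_cases hc2 : a - b ≤ -g
      · rw [if_pos hc2] at h2
        rw [h1, h2]
        have h7 : g + a ≤ b := le_neg_add_iff_add_le.mp (sub_le_iff_le_add.mp hc2)
        have h8 : g ≤ b - a := le_sub_iff_add_le.mpr h7
        exact le_antisymm hc1 h8
      · rw [if_neg hc2] at h2
        rw [h1, h2]
        abel
    · rw [if_neg hc1] at h1
      have h' : g < b - a := not_le.mp hc1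
      have h3 : g + a < b := lt_sub_iff_add_lt.mp h'
      have hc2 : a - b ≤ -g := by
        have h4 : a < -g + b := lt_neg_add_iff_add_lt.mpr h3
        exact le_of_lt (sub_lt_iff_lt_add.mpr h4)
      rw [if_pos hc2] at h2
      rw [h1, h2]
      abel
  · -- (iii)
    intro K hK ψ hψ hcons
    exact le_trans (hGreat.2 ⟨K, hK, ψ, hψ, hcons, rfl⟩) hA'leA
end
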